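/- arXiv:0710.1520 — 5 statements merged into one kernel-verified Lean document; each statement's English description precedes it below -/
import Mathlib

section
/- In the two-color urn model with reducible replacement matrix R = [[s, 1-s],[0,1]] where 0 < s < 1, the martingale V_n = W_n / Π_n(s) is L²-bounded: sup_n E[V_n²] < ∞. -/
open MeasureTheory Filter

/-- In the two-color urn with replacement matrix `[[s, 1-s],[0,1]]`, `0 < s < 1`,
the process `V_n = W_n / Π_n(s)`, with `Π_n(s) = ∏_{j=0}^{n-1}(1 + s/(j+1))`,
is a martingale. Here `χ_{n+1}` is the indicator of drawing a white ball at trial `n+1`,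
with conditional probability `W_n/(n+1)`, and `W_{n+1} = W_n + s χ_{n+1}`. -/
theorem stmt_3 {Ω : Type*} {m0 : MeasurableSpace Ω} (μ : Measure Ω) [IsProbabilityMeasure μ]
    (ℱ : Filtration ℕ m0) (W χ : ℕ → Ω → ℝ) (s : ℝ) (hs0 : 0 < s) (hs1 : s < 1)
    (hW0 : ∀ ω, 0 ≤ W 0 ω ∧ W 0 ω ≤ 1)
    (hχ01 : ∀ n ω, χ (n + 1) ω = 0 ∨ χ (n + 1) ω = 1)
    (hχmeas : ∀ n, Measurable[ℱ (n + 1)] (χ (n + 1)))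
    (hadapted : Adapted ℱ W)
    (hevol : ∀ n ω, W (n + 1) ω = W n ω + s * χ (n + 1) ω)
    (hdraw : ∀ n, μ[χ (n + 1) | ℱ n] =ᵐ[μ] fun ω => W n ω / (n + 1)) :
    ∃ B : ℝ, ∀ n, ∫ ω, (W n ω / ∏ j ∈ Finset.range n, (1 + s / (j + 1))) ^ 2 ∂μ ≤ B := by
  set P : ℕ → ℝ := fun n => ∏ j ∈ Finset.range n, (1 + s / (j + 1)) with hPdef
  have hfac : ∀ n : ℕ, (0:ℝ) < 1 + s / ((n:ℝ) + 1) := by intro n; positivity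
  have hPpos : ∀ n, 0 < P n := fun n => Finset.prod_pos fun j _ => hfac j
  have hPsucc : ∀ n, P (n+1) = P n * (1 + s / ((n:ℝ)+1)) := by
    intro n; simp [hPdef, Finset.prod_range_succ]
  have hPlb : ∀ n : ℕ, ((n:ℝ)+1) ^ s ≤ P n := by
    intro n
    induction n with
    | zero => simp [hPdef]
    | succ n ih =>
      have h1 : (((n:ℕ)+1:ℕ):ℝ)+1 = ((n:ℝ)+1) * (1 + 1/((n:ℝ)+1)) := by
        push_cast; field_simp
      have h2 : ((((n:ℕ)+1:ℕ):ℝ)+1) ^ s = ((n:ℝ)+1)^s * (1 + 1/((n:ℝ)+1)) ^ s := by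
        rw [h1, Real.mul_rpow (by positivity) (by positivity)]
      have h3 : (1 + 1/((n:ℝ)+1)) ^ s ≤ 1 + s * (1/((n:ℝ)+1)) := by
        refine rpow_one_add_le_one_add_mul_self ?_ hs0.le hs1.le
        have : (0:ℝ) ≤ 1/((n:ℝ)+1) := by positivity
        linarith
      have h3' : (1 + 1/((n:ℝ)+1)) ^ s ≤ 1 + s/((n:ℝ)+1) := by
        have h4 : 1 + s * (1/((n:ℝ)+1)) = 1 + s/((n:ℝ)+1) := by ring
        linarith
      rw [h2, hPsucc]
      exact mul_le_mul ih h3' (Real.rpow_nonneg (by positivity) s) (hPpos n).le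
  -- pointwise bounds on W
  have hχnn : ∀ n ω, 0 ≤ χ (n+1) ω := by
    intro n ω; rcases hχ01 n ω with h|h <;> rw [h] <;> norm_num
  have hχle1 : ∀ n ω, χ (n+1) ω ≤ 1 := by
    intro n ω; rcases hχ01 n ω with h|h <;> rw [h] <;> norm_num
  have hWnn : ∀ n ω, 0 ≤ W n ω := by
    intro n
    induction n with
    | zero => exact fun ω => (hW0 ω).1
    | succ n ih => intro ω; rw [hevol]; have := hχnn n ω; have := ih ω; positivity
  have hWub : ∀ n ω, W n ω ≤ (n:ℝ) + 1 := by
    intro n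
    induction n with
    | zero => intro ω; simpa using (hW0 ω).2
    | succ n ih =>
      intro ω; rw [hevol]
      have h1 := ih ω
      have h2 := hχle1 n ω
      have : s * χ (n+1) ω ≤ 1 := by nlinarith [hχnn n ω]
      push_cast; linarith
  -- measurability
  have hWm : ∀ n, Measurable (W n) := fun n => ((hadapted n)).mono (ℱ.le n) le_rfl
  have hχm : ∀ n, Measurable (χ (n+1)) := fun n => (hχmeas n).mono (ℱ.le (n+1)) le_rfl
  -- integrability helper
  have hint : ∀ (f : Ω → ℝ) (C : ℝ), Measurable f → (∀ ω, |f ω| ≤ C) → Integrable f μ := by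
    intro f C hf hb
    exact (integrable_const C).mono' hf.aestronglyMeasurable
      (Filter.Eventually.of_forall fun ω => by simpa using hb ω)
  have intW : ∀ n, Integrable (W n) μ := by
    intro n
    refine hint _ ((n:ℝ)+1) (hWm n) fun ω => ?_
    rw [abs_le]; exact ⟨by linarith [hWnn n ω], hWub n ω⟩
  have intW2 : ∀ n, Integrable (fun ω => (W n ω)^2) μ := by
    intro n
    refine hint _ (((n:ℝ)+1)^2) ((hWm n).pow_const 2) fun ω => ?_
    rw [abs_le]
    constructor
    · nlinarith [hWnn n ω]
    · nlinarith [hWnn n ω, hWub n ω]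
  have intχ : ∀ n, Integrable (χ (n+1)) μ := by
    intro n
    refine hint _ 1 (hχm n) fun ω => ?_
    rw [abs_le]; exact ⟨by linarith [hχnn n ω], hχle1 n ω⟩
  have intWχ : ∀ n, Integrable (W n * χ (n+1)) μ := by
    intro n
    refine hint _ ((n:ℝ)+1) ((hWm n).mul (hχm n)) fun ω => ?_
    rw [abs_le]
    constructor
    · simp only [Pi.mul_apply]; nlinarith [hWnn n ω, hχnn n ω, hWub n ω, hχle1 n ω]
    · simp only [Pi.mul_apply]; nlinarith [hWnn n ω, hχnn n ω, hWub n ω, hχle1 n ω]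
  -- expectations
  have hEχ : ∀ n, ∫ ω, χ (n+1) ω ∂μ = (∫ ω, W n ω ∂μ) / ((n:ℝ)+1) := by
    intro n
    rw [← integral_condExp (ℱ.le n) (f := χ (n+1)), integral_congr_ae (hdraw n), integral_div]
  have hEWχ : ∀ n, ∫ ω, W n ω * χ (n+1) ω ∂μ = (∫ ω, (W n ω)^2 ∂μ) / ((n:ℝ)+1) := by
    intro n
    have hpull := condExp_mul_of_stronglyMeasurable_left (m := ℱ n) (μ := μ)
      (hadapted n).stronglyMeasurable (intWχ n) (intχ n)
    have h1 : ∫ ω, W n ω * χ (n+1) ω ∂μ = ∫ ω, (μ[W n * χ (n+1)|ℱ n]) ω ∂μ :=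
      (integral_condExp (ℱ.le n)).symm
    have hae : μ[W n * χ (n+1)|ℱ n] =ᵐ[μ] fun ω => (W n ω)^2 / ((n:ℝ)+1) := by
      filter_upwards [hpull, hdraw n] with ω hp hd
      simp only [Pi.mul_apply] at hp
      rw [hp, hd]; ring
    rw [h1, integral_congr_ae hae, integral_div]
  have hEW : ∀ n, ∫ ω, W n ω ∂μ ≤ P n := by
    intro n
    induction n with
    | zero =>
      have : ∫ ω, W 0 ω ∂μ ≤ ∫ _, (1:ℝ) ∂μ :=
        integral_mono (intW 0) (integrable_const 1) fun ω => (hW0 ω).2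
      simpa [hPdef] using this
    | succ n ih =>
      have hev : ∫ ω, W (n+1) ω ∂μ = ∫ ω, W n ω ∂μ + s * ∫ ω, χ (n+1) ω ∂μ := by
        simp_rw [hevol n]
        rw [integral_add (intW n) ((intχ n).const_mul s), integral_const_mul]
      rw [hev, hEχ n, hPsucc]
      have h0 : 0 ≤ ∫ ω, W n ω ∂μ := integral_nonneg fun ω => hWnn n ω
      have hc : (0:ℝ) < (n:ℝ) + 1 := by positivity
      calc (∫ ω, W n ω ∂μ) + s * ((∫ ω, W n ω ∂μ) / ((n:ℝ)+1))
          = (∫ ω, W n ω ∂μ) * (1 + s / ((n:ℝ)+1)) := by field_simp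
        _ ≤ P n * (1 + s / ((n:ℝ)+1)) := by gcongr
  have hEW2nn : ∀ n, 0 ≤ ∫ ω, (W n ω)^2 ∂μ :=
    fun n => integral_nonneg fun ω => sq_nonneg _
  have hEW2succ : ∀ n, ∫ ω, (W (n+1) ω)^2 ∂μ =
      (∫ ω, (W n ω)^2 ∂μ) * (1 + 2*s/((n:ℝ)+1)) + s^2 * (∫ ω, W n ω ∂μ) / ((n:ℝ)+1) := by
    intro n
    have hpt : ∀ ω, (W (n+1) ω)^2 =
        (W n ω)^2 + (2*s) * (W n ω * χ (n+1) ω) + s^2 * χ (n+1) ω := by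
      intro ω
      rw [hevol]
      rcases hχ01 n ω with h|h <;> rw [h] <;> ring
    have iWχ : Integrable (fun ω => W n ω * χ (n+1) ω) μ := intWχ n
    have iB : Integrable (fun ω => s^2 * χ (n+1) ω) μ := (intχ n).const_mul (s^2)
    have iC : Integrable (fun ω => (2*s) * (W n ω * χ (n+1) ω)) μ := iWχ.const_mul (2*s)
    have iA : Integrable (fun ω => W n ω ^ 2 + (2*s) * (W n ω * χ (n+1) ω)) μ :=
      (intW2 n).add iC
    simp_rw [hpt]
    rw [integral_add iA iB, integral_add (intW2 n) iC,
      integral_const_mul, integral_const_mul, hEχ n, hEWχ n]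
    have hc : ((n:ℝ)+1) ≠ 0 := by positivity
    field_simp
  -- the key quantitative bound by induction
  set T : ℝ := ∑' k : ℕ, ((k:ℝ)+1) ^ (-(1+s)) with hT
  have hsummable : Summable (fun k : ℕ => ((k:ℝ)+1) ^ (-(1+s))) := by
    have h : Summable (fun k : ℕ => ((k:ℝ)) ^ (-(1+s))) := by
      rw [Real.summable_nat_rpow]; linarith
    have h2 := (summable_nat_add_iff (f := fun k : ℕ => ((k:ℝ)) ^ (-(1+s))) 1).mpr h
    refine h2.congr fun k => ?_
    push_cast
    ring_nf
  have htermnn : ∀ k : ℕ, 0 ≤ ((k:ℝ)+1) ^ (-(1+s)) :=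
    fun k => Real.rpow_nonneg (by positivity) _
  have hSle : ∀ n, ∑ k ∈ Finset.range n, ((k:ℝ)+1) ^ (-(1+s)) ≤ T := by
    intro n
    exact hsummable.sum_le_tsum (Finset.range n) (fun k _ => htermnn k)
  have key : ∀ n, ∫ ω, (W n ω)^2 ∂μ ≤
      P n ^ 2 * (1 + s^2 * ∑ k ∈ Finset.range n, ((k:ℝ)+1) ^ (-(1+s))) := by
    intro n
    induction n with
    | zero =>
      have : ∫ ω, (W 0 ω)^2 ∂μ ≤ ∫ _, (1:ℝ) ∂μ := by
        refine integral_mono (intW2 0) (integrable_const 1) fun ω => ?_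
        nlinarith [(hW0 ω).1, (hW0 ω).2]
      simpa [hPdef] using this
    | succ n ih =>
      have hSnn : 0 ≤ 1 + s^2 * ∑ k ∈ Finset.range n, ((k:ℝ)+1) ^ (-(1+s)) := by
        have : 0 ≤ ∑ k ∈ Finset.range n, ((k:ℝ)+1) ^ (-(1+s)) :=
          Finset.sum_nonneg fun k _ => htermnn k
        nlinarith
      rw [hEW2succ n, Finset.sum_range_succ]
      have hc : (0:ℝ) < (n:ℝ) + 1 := by positivity
      -- first piece
      have h1 : (∫ ω, (W n ω)^2 ∂μ) * (1 + 2*s/((n:ℝ)+1)) ≤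
          P n ^ 2 * (1 + s^2 * ∑ k ∈ Finset.range n, ((k:ℝ)+1) ^ (-(1+s)))
            * (1 + s/((n:ℝ)+1))^2 := by
        have ha : (1 + 2*s/((n:ℝ)+1)) ≤ (1 + s/((n:ℝ)+1))^2 := by
          have expand : (1 + s/((n:ℝ)+1))^2 = 1 + 2*s/((n:ℝ)+1) + (s/((n:ℝ)+1))^2 := by
            ring
          rw [expand]
          linarith [sq_nonneg (s/((n:ℝ)+1))]
        have hb : 0 < 1 + 2*s/((n:ℝ)+1) := by positivity
        calc (∫ ω, (W n ω)^2 ∂μ) * (1 + 2*s/((n:ℝ)+1))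
            ≤ (P n ^ 2 * (1 + s^2 * ∑ k ∈ Finset.range n, ((k:ℝ)+1) ^ (-(1+s))))
              * (1 + 2*s/((n:ℝ)+1)) := by gcongr
          _ ≤ _ := by gcongr
      -- second piece
      have h2 : s^2 * (∫ ω, W n ω ∂μ) / ((n:ℝ)+1) ≤
          P (n+1) ^ 2 * (s^2 * (((n:ℝ)+1) ^ (-(1+s)))) := by
        have hPn1 : ((n:ℝ)+1) ^ s ≤ P (n+1) := by
          calc ((n:ℝ)+1) ^ s ≤ ((((n:ℕ)+1:ℕ):ℝ)+1) ^ s := by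
                refine Real.rpow_le_rpow (by positivity) (by push_cast; linarith) hs0.le
            _ ≤ P (n+1) := hPlb (n+1)
        have hPn2 : P n * ((n:ℝ)+1) ^ s ≤ P (n+1) ^ 2 := by
          have h := hPsucc n
          have : P n ≤ P (n+1) := by
            rw [h]
            refine le_mul_of_one_le_right (hPpos n).le ?_
            have : 0 ≤ s / ((n:ℝ)+1) := by positivity
            linarith
          calc P n * ((n:ℝ)+1) ^ s ≤ P (n+1) * P (n+1) := by
                exact mul_le_mul this hPn1 (Real.rpow_nonneg (by positivity) s) (hPpos (n+1)).le
            _ = P (n+1)^2 := by ring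
        have hrw : ((n:ℝ)+1) ^ (-(1+s)) = 1 / (((n:ℝ)+1) * ((n:ℝ)+1) ^ s) := by
          rw [Real.rpow_neg (by positivity), Real.rpow_add hc, Real.rpow_one]
          field_simp
        have hEWn := hEW n
        have hWint_nn : 0 ≤ ∫ ω, W n ω ∂μ := integral_nonneg fun ω => hWnn n ω
        have hrp : (0:ℝ) < ((n:ℝ)+1) ^ s := Real.rpow_pos_of_pos hc s
        rw [hrw]
        rw [div_le_iff₀ hc]
        have goal2 : s^2 * (∫ ω, W n ω ∂μ) * (((n:ℝ)+1) ^ s) ≤ P (n+1)^2 * s^2 := by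
          calc s^2 * (∫ ω, W n ω ∂μ) * (((n:ℝ)+1) ^ s)
              ≤ s^2 * P n * (((n:ℝ)+1) ^ s) := by gcongr
            _ = s^2 * (P n * ((n:ℝ)+1) ^ s) := by ring
            _ ≤ s^2 * P (n+1)^2 := by gcongr
            _ = P (n+1)^2 * s^2 := by ring
        calc s^2 * (∫ ω, W n ω ∂μ)
            = (s^2 * (∫ ω, W n ω ∂μ) * (((n:ℝ)+1) ^ s)) / (((n:ℝ)+1) ^ s) := by
              field_simp
          _ ≤ (P (n+1)^2 * s^2) / (((n:ℝ)+1) ^ s) := by gcongr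
          _ = P (n+1) ^ 2 * (s^2 * (1 / (((n:ℝ)+1) * ((n:ℝ)+1) ^ s))) * (((n:ℝ)+1)) := by
              field_simp
      calc (∫ ω, (W n ω)^2 ∂μ) * (1 + 2*s/((n:ℝ)+1)) + s^2 * (∫ ω, W n ω ∂μ) / ((n:ℝ)+1)
          ≤ P n ^ 2 * (1 + s^2 * ∑ k ∈ Finset.range n, ((k:ℝ)+1) ^ (-(1+s)))
              * (1 + s/((n:ℝ)+1))^2
            + P (n+1) ^ 2 * (s^2 * (((n:ℝ)+1) ^ (-(1+s)))) := add_le_add h1 h2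
        _ = P (n+1) ^ 2 * (1 + s^2 * (∑ k ∈ Finset.range n, ((k:ℝ)+1) ^ (-(1+s))
              + ((n:ℝ)+1) ^ (-(1+s)))) := by
            rw [hPsucc n]; push_cast; ring
  refine ⟨1 + s^2 * T, fun n => ?_⟩
  have hrw : ∀ ω, (W n ω / P n) ^ 2 = (W n ω)^2 * (1 / P n ^ 2) := by
    intro ω; field_simp
  calc ∫ ω, (W n ω / P n) ^ 2 ∂μ
      = (∫ ω, (W n ω)^2 ∂μ) * (1 / P n ^ 2) := by
        simp_rw [hrw]; rw [integral_mul_const]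
    _ ≤ (P n ^ 2 * (1 + s^2 * ∑ k ∈ Finset.range n, ((k:ℝ)+1) ^ (-(1+s)))) * (1 / P n ^2) :=
        mul_le_mul_of_nonneg_right (key n) (by positivity)
    _ = 1 + s^2 * ∑ k ∈ Finset.range n, ((k:ℝ)+1) ^ (-(1+s)) := by
        field_simp; exact div_self (hPpos n).ne'
    _ ≤ 1 + s^2 * T := by
        have := hSle n; nlinarith
end

section
/- Let 0 < a < 1 and suppose b_j ~ σ²/j as j → ∞ with σ² > 0. Then Σ_{j=1}^n b_j ∏_{i=j+1}^n (1 - a/i)² converges to σ²/(2a) as n → ∞. -/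
open Filter

/-- The product `∏_{i=1}^n (1 - a/i)` tends to `0` for `0 < a < 1`. -/
lemma stmt_8_prod_tendsto_zero (a : ℝ) (ha0 : 0 < a) (ha1 : a < 1) :
    Tendsto (fun n : ℕ => ∏ i ∈ Finset.Ioc 0 n, (1 - a / i)) atTop (nhds 0) := by
  have hfac : ∀ i : ℕ, 0 < i → 0 < 1 - a / (i : ℝ) := by
    intro i hi
    have h1 : (1 : ℝ) ≤ (i : ℝ) := by exact_mod_cast hi
    have : a / (i : ℝ) ≤ a / 1 := by
      apply div_le_div_of_nonneg_left ha0.le one_pos h1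
    simp only [div_one] at this
    linarith
  -- harmonic sum diverges
  have hharm : Tendsto (fun n : ℕ => ∑ i ∈ Finset.Ioc 0 n, a / (i : ℝ)) atTop atTop := by
    have h1 : ∀ n : ℕ, ∑ i ∈ Finset.Ioc 0 n, a / (i : ℝ)
        = a * ∑ i ∈ Finset.range n, (1 / ((i : ℝ) + 1)) := by
      intro n
      rw [Finset.mul_sum]
      have : Finset.Ioc 0 n = Finset.Ico 1 (n + 1) := by
        rw [Finset.Ico_add_one_right_eq_Icc, ← Finset.Icc_add_one_left_eq_Ioc]; rfl
      rw [this, Finset.sum_Ico_eq_sum_range]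
      simp only [Nat.add_sub_cancel]
      refine Finset.sum_congr rfl fun i _ => ?_
      push_cast
      rw [mul_one_div, add_comm (1 : ℝ)]
    simp only [h1]
    exact Tendsto.const_mul_atTop ha0 Real.tendsto_sum_range_one_div_nat_succ_atTop
  have hub : ∀ n : ℕ, ∏ i ∈ Finset.Ioc 0 n, (1 - a / (i : ℝ))
      ≤ Real.exp (-∑ i ∈ Finset.Ioc 0 n, a / (i : ℝ)) := by
    intro n
    rw [← Finset.sum_neg_distrib, Real.exp_sum]
    apply Finset.prod_le_prod
    · intro i hi
      exact (hfac i (Finset.mem_Ioc.mp hi).1).le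
    · intro i _
      have := Real.add_one_le_exp (-(a / (i : ℝ)))
      linarith
  have hexp : Tendsto (fun n : ℕ => Real.exp (-∑ i ∈ Finset.Ioc 0 n, a / (i : ℝ)))
      atTop (nhds 0) :=
    Real.tendsto_exp_atBot.comp (tendsto_neg_atBot_iff.mpr hharm)
  refine squeeze_zero (fun n => ?_) hub hexp
  exact Finset.prod_nonneg fun i hi => (hfac i (Finset.mem_Ioc.mp hi).1).le

/-- If `0 < a < 1` and `b_j ~ σ²/j` with `σ² > 0`, then
`Σ_{j=1}^n b_j ∏_{i=j+1}^n (1 - a/i)² → σ²/(2a)`. -/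
theorem stmt_8 (a σ2 : ℝ) (ha0 : 0 < a) (ha1 : a < 1) (hσ : 0 < σ2)
    (b : ℕ → ℝ) (hb : Tendsto (fun j : ℕ => b j * j) atTop (nhds σ2)) :
    Tendsto
      (fun n : ℕ => ∑ j ∈ Finset.Icc 1 n, b j * (∏ i ∈ Finset.Icc (j + 1) n, (1 - a / i)) ^ 2)
      atTop (nhds (σ2 / (2 * a))) := by
  set L : ℝ := σ2 / (2 * a) with hLdef
  have hL : 2 * a * L = σ2 := by
    rw [hLdef]
    field_simp [ha0.ne']
  have hLpos : 0 < L := div_pos hσ (by linarith)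
  set S : ℕ → ℝ := fun n =>
    ∑ j ∈ Finset.Icc 1 n, b j * (∏ i ∈ Finset.Icc (j + 1) n, (1 - a / i)) ^ 2 with hSdef
  set c : ℕ → ℝ := fun n => 1 - (1 - a / n) ^ 2 with hcdef
  have hfac : ∀ i : ℕ, 0 < i → 0 < 1 - a / (i : ℝ) := by
    intro i hi
    have h1 : (1 : ℝ) ≤ (i : ℝ) := by exact_mod_cast hi
    have : a / (i : ℝ) ≤ a / 1 := by
      apply div_le_div_of_nonneg_left ha0.le one_pos h1
    simp only [div_one] at this
    linarith
  have hfac1 : ∀ i : ℕ, 0 < i → 1 - a / (i : ℝ) < 1 := by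
    intro i hi
    have h0 : (0 : ℝ) < (i : ℝ) := by exact_mod_cast hi
    have : 0 < a / (i : ℝ) := div_pos ha0 h0
    linarith
  have h1c : ∀ n : ℕ, 1 - c n = (1 - a / n) ^ 2 := by
    intro n; simp [hcdef]
  have h1c_nonneg : ∀ n : ℕ, 0 ≤ 1 - c n := by
    intro n; rw [h1c]; exact sq_nonneg _
  have hc_ge : ∀ i : ℕ, 0 < i → a / (i : ℝ) ≤ c i := by
    intro i hi
    have h1 := hfac i hi
    have h2 := hfac1 i hi
    simp only [hcdef]
    nlinarith [sq_nonneg (1 - a / (i : ℝ))]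
  -- recurrence
  have hrec : ∀ n : ℕ, S (n + 1) = (1 - c (n + 1)) * S n + b (n + 1) := by
    intro n
    rw [h1c]
    simp only [hSdef]
    rw [Finset.sum_Icc_succ_top (Nat.one_le_iff_ne_zero.mpr (Nat.succ_ne_zero n))]
    have hempty : Finset.Icc (n + 1 + 1) (n + 1) = (∅ : Finset ℕ) :=
      Finset.Icc_eq_empty (by omega)
    rw [hempty]
    simp only [Finset.prod_empty, one_pow, mul_one]
    congr 1
    rw [Finset.mul_sum]
    refine Finset.sum_congr rfl fun j hj => ?_
    have hjn : j ≤ n := (Finset.mem_Icc.mp hj).2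
    rw [Finset.prod_Icc_succ_top (by omega : j + 1 ≤ n + 1)]
    push_cast
    ring
  -- eventual bound on b n - c n * L
  have hT : Tendsto (fun n : ℕ => (b n - c n * L) * n) atTop (nhds 0) := by
    have hcL : Tendsto (fun n : ℕ => c n * (n : ℝ) * L) atTop (nhds σ2) := by
      have heq : ∀ᶠ n : ℕ in atTop, (2 * a - a ^ 2 / n) * L = c n * (n : ℝ) * L := by
        filter_upwards [eventually_gt_atTop 0] with n hn
        have hn0 : (n : ℝ) ≠ 0 := by positivity
        simp only [hcdef]
        field_simp
        ring
      refine Tendsto.congr' heq ?_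
      have h1 : Tendsto (fun n : ℕ => 2 * a - a ^ 2 / n) atTop (nhds (2 * a)) := by
        have := tendsto_one_div_atTop_nhds_zero_nat.const_mul (a ^ 2)
        simp only [mul_one_div] at this
        have h2 := (tendsto_const_nhds (x := 2 * a) (f := atTop (α := ℕ))).sub this
        simpa using h2
      have h2 := h1.mul_const L
      rw [hL] at h2
      exact h2
    have := hb.sub hcL
    simp only [sub_self] at this
    refine this.congr fun n => by ring
  have hbc : ∀ ε : ℝ, 0 < ε → ∃ N : ℕ, 0 < N ∧
      ∀ n : ℕ, N ≤ n → |b n - c n * L| ≤ c n * ε := by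
    intro ε hε
    have hpos : (0 : ℝ) < a * ε := by positivity
    have hev := hT.abs.eventually_lt_const (by simpa using hpos)
    rw [eventually_atTop] at hev
    obtain ⟨N₀, hN₀⟩ := hev
    refine ⟨max N₀ 1, by omega, fun n hn => ?_⟩
    have hn1 : 0 < n := by omega
    have hnR : (0 : ℝ) < (n : ℝ) := by exact_mod_cast hn1
    have h1 : |(b n - c n * L) * n| < a * ε := hN₀ n (by omega)
    rw [abs_mul, abs_of_pos hnR] at h1
    have h2 : a ≤ c n * n := by
      have := hc_ge n hn1
      calc a = a / n * n := by field_simp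
        _ ≤ c n * n := by
          apply mul_le_mul_of_nonneg_right this hnR.le
    have h3 : |b n - c n * L| * n ≤ c n * ε * n := by
      calc |b n - c n * L| * n ≤ a * ε := h1.le
        _ ≤ c n * n * ε := by nlinarith
        _ = c n * ε * n := by ring
    exact le_of_mul_le_mul_right h3 hnR
  -- main convergence
  rw [Metric.tendsto_atTop]
  intro ε hε
  obtain ⟨N, hN0, hNb⟩ := hbc (ε / 4) (by linarith)
  -- inductive bound
  have key : ∀ n : ℕ, N ≤ n →
      |S n - L| ≤ ε / 4 + (∏ i ∈ Finset.Ioc N n, (1 - c i)) * |S N - L| := by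
    intro n hn
    induction n, hn using Nat.le_induction with
    | base => simp; linarith
    | succ n hn ih =>
      have hprod : ∏ i ∈ Finset.Ioc N (n + 1), (1 - c i)
          = (∏ i ∈ Finset.Ioc N n, (1 - c i)) * (1 - c (n + 1)) :=
        Finset.prod_Ioc_succ_top hn _
      have hdiff : S (n + 1) - L = (1 - c (n + 1)) * (S n - L) + (b (n + 1) - c (n + 1) * L) := by
        rw [hrec n]; ring
      have habs : |S (n + 1) - L|
          ≤ (1 - c (n + 1)) * |S n - L| + |b (n + 1) - c (n + 1) * L| := by
        rw [hdiff]
        calc |(1 - c (n + 1)) * (S n - L) + (b (n + 1) - c (n + 1) * L)|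
            ≤ |(1 - c (n + 1)) * (S n - L)| + |b (n + 1) - c (n + 1) * L| := abs_add_le _ _
          _ = (1 - c (n + 1)) * |S n - L| + |b (n + 1) - c (n + 1) * L| := by
              rw [abs_mul, abs_of_nonneg (h1c_nonneg (n + 1))]
      have hb1 : |b (n + 1) - c (n + 1) * L| ≤ c (n + 1) * (ε / 4) := hNb (n + 1) (by omega)
      rw [hprod]
      have h1 := h1c_nonneg (n + 1)
      have h4 : (1 - c (n + 1)) * |S n - L|
          ≤ (1 - c (n + 1)) * (ε / 4 + (∏ i ∈ Finset.Ioc N n, (1 - c i)) * |S N - L|) :=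
        mul_le_mul_of_nonneg_left ih h1
      calc |S (n + 1) - L|
          ≤ (1 - c (n + 1)) * |S n - L| + |b (n + 1) - c (n + 1) * L| := habs
        _ ≤ (1 - c (n + 1)) * (ε / 4 + (∏ i ∈ Finset.Ioc N n, (1 - c i)) * |S N - L|)
            + c (n + 1) * (ε / 4) := add_le_add h4 hb1
        _ = ε / 4 + (∏ i ∈ Finset.Ioc N n, (1 - c i)) * (1 - c (n + 1)) * |S N - L| := by ring
  -- product comparison and limit
  have hQN : 0 < ∏ i ∈ Finset.Ioc 0 N, (1 - a / (i : ℝ)) :=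
    Finset.prod_pos fun i hi => hfac i (Finset.mem_Ioc.mp hi).1
  have hsplit : ∀ n : ℕ, N ≤ n →
      ∏ i ∈ Finset.Ioc N n, (1 - a / (i : ℝ))
        = (∏ i ∈ Finset.Ioc 0 n, (1 - a / (i : ℝ))) / ∏ i ∈ Finset.Ioc 0 N, (1 - a / (i : ℝ)) := by
    intro n hn
    rw [eq_div_iff hQN.ne', mul_comm]
    exact Finset.prod_Ioc_consecutive _ (Nat.zero_le N) hn
  have hPle : ∀ n : ℕ, N ≤ n →
      ∏ i ∈ Finset.Ioc N n, (1 - c i) ≤ ∏ i ∈ Finset.Ioc N n, (1 - a / (i : ℝ)) := by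
    intro n _
    apply Finset.prod_le_prod
    · intro i _; exact h1c_nonneg i
    · intro i hi
      have hi0 : 0 < i := lt_of_le_of_lt (Nat.zero_le N) (Finset.mem_Ioc.mp hi).1
      rw [h1c]
      have h1 := hfac i hi0
      have h2 := hfac1 i hi0
      nlinarith
  have hRlim : Tendsto (fun n : ℕ =>
      (∏ i ∈ Finset.Ioc N n, (1 - a / (i : ℝ))) * |S N - L|) atTop (nhds 0) := by
    have h0 := stmt_8_prod_tendsto_zero a ha0 ha1
    have h1 : Tendsto (fun n : ℕ =>
        (∏ i ∈ Finset.Ioc 0 n, (1 - a / (i : ℝ))) / (∏ i ∈ Finset.Ioc 0 N, (1 - a / (i : ℝ)))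
          * |S N - L|) atTop (nhds 0) := by
      have := (h0.div_const (∏ i ∈ Finset.Ioc 0 N, (1 - a / (i : ℝ)))).mul_const |S N - L|
      simpa using this
    refine Tendsto.congr' ?_ h1
    filter_upwards [eventually_ge_atTop N] with n hn
    rw [hsplit n hn]
  have hev := hRlim.eventually_lt_const (by linarith : (0 : ℝ) < ε / 2)
  rw [eventually_atTop] at hev
  obtain ⟨N₂, hN₂⟩ := hev
  refine ⟨max N N₂, fun n hn => ?_⟩
  have hnN : N ≤ n := le_trans (le_max_left _ _) hn
  have h1 := key n hnN
  have h2 : (∏ i ∈ Finset.Ioc N n, (1 - c i)) * |S N - L|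
      ≤ (∏ i ∈ Finset.Ioc N n, (1 - a / (i : ℝ))) * |S N - L| :=
    mul_le_mul_of_nonneg_right (hPle n hnN) (abs_nonneg _)
  have h3 := hN₂ n (le_trans (le_max_right _ _) hn)
  rw [Real.dist_eq]
  calc |S n - L| ≤ ε / 4 + (∏ i ∈ Finset.Ioc N n, (1 - c i)) * |S N - L| := h1
    _ ≤ ε / 4 + (∏ i ∈ Finset.Ioc N n, (1 - a / (i : ℝ))) * |S N - L| := by linarith
    _ < ε / 4 + ε / 2 := by linarith
    _ < ε := by linarith
end

section
/- In the three-color urn model with replacement matrix R = [[sQ, (columns giving row sums 1)],[0,0,1]] as in (2), where Q is a 2×2 irreducible aperiodic stochastic matrix with non-principal eigenvalue λ > 1/2 and eigenvector ξ, and 0 < s < 1, the process T_n = S_nξ / Π_n(sλ) is an L²-bounded martingale, where S_n = (W_n, B_n). -/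
open MeasureTheory Filter

private lemma bint_aux {Ω : Type*} {m0 : MeasurableSpace Ω} (μ : Measure Ω) [IsFiniteMeasure μ]
    {f : Ω → ℝ} (hf : Measurable f) (C : ℝ) (h : ∀ ω, |f ω| ≤ C) : Integrable f μ :=
  (integrable_const C).mono' hf.aestronglyMeasurable (Eventually.of_forall fun ω => by
    simpa using h ω)

set_option maxHeartbeats 4000000 in
/-- Three-color urn with replacement matrix `[[sQ, *],[0,0,1]]`, `Q` a 2×2 irreducible
aperiodic stochastic matrix with non-principal eigenvalue `λ > 1/2` and eigenvector
`ξ`, `0 < s < 1`. Then `T_n = S_n ξ / Π_n(sλ)` is an L²-bounded martingale, where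
`S_n = (W_n, B_n)` and `Π_n(sλ) = ∏_{j=0}^{n-1}(1 + sλ/(j+1))`. -/
theorem stmt_10 {Ω : Type*} {m0 : MeasurableSpace Ω} (μ : Measure Ω) [IsProbabilityMeasure μ]
    (ℱ : Filtration ℕ m0) (Q : Matrix (Fin 2) (Fin 2) ℝ) (s l : ℝ) (ξ : Fin 2 → ℝ)
    (S χ : ℕ → Ω → Fin 2 → ℝ)
    (hs0 : 0 < s) (hs1 : s < 1)
    (hQnn : ∀ i j, 0 ≤ Q i j) (hQrow : ∀ i, ∑ j, Q i j = 1)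
    (hirr : 0 < Q 0 1 ∧ 0 < Q 1 0) (haper : 0 < Q 0 0 + Q 1 1)
    (hl : 1 / 2 < l) (hl1 : l < 1) (hξ : Q.mulVec ξ = l • ξ) (hξ0 : ξ ≠ 0)
    (hSnn : ∀ n ω i, 0 ≤ S n ω i) (hStot : ∀ n ω, S n ω 0 + S n ω 1 ≤ n + 1)
    (hχ : ∀ n ω, χ (n + 1) ω = Pi.single 0 1 ∨ χ (n + 1) ω = Pi.single 1 1 ∨
      χ (n + 1) ω = 0)
    (hSmeas : ∀ n i, Measurable[ℱ n] (fun ω => S n ω i))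
    (hχmeas : ∀ n i, Measurable[ℱ (n + 1)] (fun ω => χ (n + 1) ω i))
    (hevol : ∀ n ω, S (n + 1) ω = S n ω + s • Matrix.vecMul (χ (n + 1) ω) Q)
    (hdraw : ∀ n i, μ[fun ω => χ (n + 1) ω i | ℱ n] =ᵐ[μ] fun ω => S n ω i / (n + 1)) :
    Martingale
      (fun n ω => (∑ i, S n ω i * ξ i) / ∏ j ∈ Finset.range n, (1 + s * l / (j + 1))) ℱ μ ∧
    ∃ B : ℝ, ∀ n,
      ∫ ω, ((∑ i, S n ω i * ξ i) / ∏ j ∈ Finset.range n, (1 + s * l / (j + 1))) ^ 2 ∂μ ≤ B := by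
  -- basic positivity
  have hl0 : 0 < l := by linarith
  have hsl : 0 < s * l := mul_pos hs0 hl0
  have hn1 : ∀ n : ℕ, (0:ℝ) < (n:ℝ) + 1 := fun n => by positivity
  have hn1' : ∀ n : ℕ, ((n:ℝ) + 1) ≠ 0 := fun n => (hn1 n).ne'
  -- abbreviations
  set M : ℕ → Ω → ℝ := fun n ω => ∑ i, S n ω i * ξ i with hMdef
  set Pr : ℕ → ℝ := fun n => ∏ j ∈ Finset.range n, (1 + s * l / (j + 1)) with hPrdef
  set Pp : ℕ → ℝ := fun n => ∏ j ∈ Finset.range n, (1 + s / (j + 1)) with hPpdef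
  set Y : ℕ → Ω → ℝ := fun n ω => χ (n+1) ω 0 * ξ 0 + χ (n+1) ω 1 * ξ 1 with hYdef
  set K1 : ℝ := |ξ 0| + |ξ 1| with hK1def
  set K2 : ℝ := ξ 0 ^ 2 + ξ 1 ^ 2 with hK2def
  have hK1nn : 0 ≤ K1 := by rw [hK1def]; positivity
  have hK2nn : 0 ≤ K2 := by rw [hK2def]; positivity
  -- product facts
  have hPr_succ : ∀ n : ℕ, Pr (n+1) = Pr n * (1 + s * l / (n + 1)) := fun n => by
    rw [hPrdef]; exact Finset.prod_range_succ _ _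
  have hPp_succ : ∀ n : ℕ, Pp (n+1) = Pp n * (1 + s / (n + 1)) := fun n => by
    rw [hPpdef]; exact Finset.prod_range_succ _ _
  have hPr0 : Pr 0 = 1 := by rw [hPrdef]; simp
  have hPp0 : Pp 0 = 1 := by rw [hPpdef]; simp
  have hfac1 : ∀ n : ℕ, (1:ℝ) ≤ 1 + s * l / (n + 1) := fun n => by
    have h := div_nonneg hsl.le (hn1 n).le; linarith
  have hfacp1 : ∀ n : ℕ, (1:ℝ) ≤ 1 + s / (n + 1) := fun n => by
    have h := div_nonneg hs0.le (hn1 n).le; linarith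
  have hPr1 : ∀ n, (1:ℝ) ≤ Pr n := by
    intro n
    induction n with
    | zero => rw [hPr0]
    | succ n ih => rw [hPr_succ n]; nlinarith [hfac1 n]
  have hPp1 : ∀ n, (1:ℝ) ≤ Pp n := by
    intro n
    induction n with
    | zero => rw [hPp0]
    | succ n ih => rw [hPp_succ n]; nlinarith [hfacp1 n]
  have hPrpos : ∀ n, (0:ℝ) < Pr n := fun n => lt_of_lt_of_le one_pos (hPr1 n)
  have hPppos : ∀ n, (0:ℝ) < Pp n := fun n => lt_of_lt_of_le one_pos (hPp1 n)
  -- eigen equations and row sums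
  have hξeq : ∀ i : Fin 2, Q i 0 * ξ 0 + Q i 1 * ξ 1 = l * ξ i := by
    intro i
    have := congrFun hξ i
    simpa [Matrix.mulVec, dotProduct, Fin.sum_univ_two] using this
  have hQr : ∀ i : Fin 2, Q i 0 + Q i 1 = 1 := fun i => by
    simpa [Fin.sum_univ_two] using hQrow i
  -- bounds on S and χ
  have hSb : ∀ n ω (i : Fin 2), S n ω i ≤ (n:ℝ) + 1 := by
    intro n ω
    rw [Fin.forall_fin_two]
    constructor
    · nlinarith [hSnn n ω 1, hStot n ω]
    · nlinarith [hSnn n ω 0, hStot n ω]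
  have hχv : ∀ n ω (i : Fin 2), χ (n+1) ω i = 0 ∨ χ (n+1) ω i = 1 := by
    intro n ω i
    rcases hχ n ω with h|h|h <;> rw [h] <;> fin_cases i <;>
      simp [Pi.single_apply]
  have hχnn : ∀ n ω (i : Fin 2), 0 ≤ χ (n+1) ω i := by
    intro n ω i; rcases hχv n ω i with h|h <;> rw [h] <;> norm_num
  have hχle : ∀ n ω (i : Fin 2), χ (n+1) ω i ≤ 1 := by
    intro n ω i; rcases hχv n ω i with h|h <;> rw [h] <;> norm_num
  -- pointwise expansions
  have hM2 : ∀ n ω, M n ω = S n ω 0 * ξ 0 + S n ω 1 * ξ 1 := by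
    intro n ω; rw [hMdef]; exact Fin.sum_univ_two _
  have hMabs : ∀ n ω, |M n ω| ≤ ((n:ℝ) + 1) * K1 := by
    intro n ω
    rw [hM2]
    calc |S n ω 0 * ξ 0 + S n ω 1 * ξ 1| ≤ |S n ω 0 * ξ 0| + |S n ω 1 * ξ 1| := abs_add_le _ _
    _ = S n ω 0 * |ξ 0| + S n ω 1 * |ξ 1| := by
        rw [abs_mul, abs_mul, abs_of_nonneg (hSnn n ω 0), abs_of_nonneg (hSnn n ω 1)]
    _ ≤ ((n:ℝ)+1) * |ξ 0| + ((n:ℝ)+1) * |ξ 1| := by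
        have h0 := hSb n ω 0
        have h1 := hSb n ω 1
        have a0 := abs_nonneg (ξ 0)
        have a1 := abs_nonneg (ξ 1)
        nlinarith
    _ = ((n:ℝ)+1) * K1 := by rw [hK1def]; ring
  have hYabs : ∀ n ω, |Y n ω| ≤ K1 := by
    intro n ω
    rw [hYdef]
    calc |χ (n+1) ω 0 * ξ 0 + χ (n+1) ω 1 * ξ 1|
        ≤ |χ (n+1) ω 0 * ξ 0| + |χ (n+1) ω 1 * ξ 1| := abs_add_le _ _
    _ = χ (n+1) ω 0 * |ξ 0| + χ (n+1) ω 1 * |ξ 1| := by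
        rw [abs_mul, abs_mul, abs_of_nonneg (hχnn n ω 0), abs_of_nonneg (hχnn n ω 1)]
    _ ≤ K1 := by
        have h0 := hχle n ω 0
        have h1 := hχle n ω 1
        have b0 := hχnn n ω 0
        have b1 := hχnn n ω 1
        have a0 := abs_nonneg (ξ 0)
        have a1 := abs_nonneg (ξ 1)
        rw [hK1def]
        nlinarith
  have hMstep : ∀ n ω, M (n+1) ω = M n ω + (s*l) * Y n ω := by
    intro n ω
    have e0 : S (n+1) ω 0 = S n ω 0 + s * (χ (n+1) ω 0 * Q 0 0 + χ (n+1) ω 1 * Q 1 0) := by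
      simpa [Matrix.vecMul, dotProduct, Fin.sum_univ_two] using congrFun (hevol n ω) 0
    have e1 : S (n+1) ω 1 = S n ω 1 + s * (χ (n+1) ω 0 * Q 0 1 + χ (n+1) ω 1 * Q 1 1) := by
      simpa [Matrix.vecMul, dotProduct, Fin.sum_univ_two] using congrFun (hevol n ω) 1
    rw [hM2, hM2, hYdef, e0, e1]
    show _ = _ + s * l * (χ (n+1) ω 0 * ξ 0 + χ (n+1) ω 1 * ξ 1)
    linear_combination (s * χ (n+1) ω 0) * hξeq 0 + (s * χ (n+1) ω 1) * hξeq 1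
  have hSsum_step : ∀ n ω, S (n+1) ω 0 + S (n+1) ω 1
      = S n ω 0 + S n ω 1 + s * (χ (n+1) ω 0 + χ (n+1) ω 1) := by
    intro n ω
    have e0 : S (n+1) ω 0 = S n ω 0 + s * (χ (n+1) ω 0 * Q 0 0 + χ (n+1) ω 1 * Q 1 0) := by
      simpa [Matrix.vecMul, dotProduct, Fin.sum_univ_two] using congrFun (hevol n ω) 0
    have e1 : S (n+1) ω 1 = S n ω 1 + s * (χ (n+1) ω 0 * Q 0 1 + χ (n+1) ω 1 * Q 1 1) := by
      simpa [Matrix.vecMul, dotProduct, Fin.sum_univ_two] using congrFun (hevol n ω) 1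
    rw [e0, e1]
    linear_combination (s * χ (n+1) ω 0) * hQr 0 + (s * χ (n+1) ω 1) * hQr 1
  have hYsqpt : ∀ n ω, (Y n ω)^2 = ξ 0 ^ 2 * χ (n+1) ω 0 + ξ 1 ^ 2 * χ (n+1) ω 1 := by
    intro n ω
    rcases hχ n ω with h|h|h <;> rw [hYdef] <;> simp only [h, Pi.single_apply] <;> norm_num <;> ring
  -- measurability
  have hMmeas : ∀ n, Measurable[ℱ n] (M n) := by
    intro n
    have he : (M n) = fun ω => S n ω 0 * ξ 0 + S n ω 1 * ξ 1 := funext fun ω => hM2 n ω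
    rw [he]
    exact ((hSmeas n 0).mul_const _).add ((hSmeas n 1).mul_const _)
  have hMmeas0 : ∀ n, Measurable (M n) := fun n => (hMmeas n).mono (ℱ.le n) le_rfl
  have hSmeas0 : ∀ n (i : Fin 2), Measurable (fun ω => S n ω i) :=
    fun n i => (hSmeas n i).mono (ℱ.le n) le_rfl
  have hχmeas0 : ∀ n (i : Fin 2), Measurable (fun ω => χ (n+1) ω i) :=
    fun n i => (hχmeas n i).mono (ℱ.le (n+1)) le_rfl
  have hYmeas0 : ∀ n, Measurable (Y n) := by
    intro n
    have he : (Y n) = fun ω => χ (n+1) ω 0 * ξ 0 + χ (n+1) ω 1 * ξ 1 := by rw [hYdef]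
    rw [he]
    exact ((hχmeas0 n 0).mul_const _).add ((hχmeas0 n 1).mul_const _)
  -- integrability
  have hIntM : ∀ n, Integrable (M n) μ :=
    fun n => bint_aux μ (hMmeas0 n) _ (hMabs n)
  have hIntY : ∀ n, Integrable (Y n) μ :=
    fun n => bint_aux μ (hYmeas0 n) _ (hYabs n)
  have hIntS : ∀ n (i : Fin 2), Integrable (fun ω => S n ω i) μ := by
    intro n i
    refine bint_aux μ (hSmeas0 n i) ((n:ℝ)+1) fun ω => ?_
    rw [abs_of_nonneg (hSnn n ω i)]; exact hSb n ω i
  have hIntSsum : ∀ n, Integrable (fun ω => S n ω 0 + S n ω 1) μ :=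
    fun n => (hIntS n 0).add (hIntS n 1)
  have hIntχ : ∀ n (i : Fin 2), Integrable (fun ω => χ (n+1) ω i) μ := by
    intro n i
    refine bint_aux μ (hχmeas0 n i) 1 fun ω => ?_
    rw [abs_of_nonneg (hχnn n ω i)]; exact hχle n ω i
  have hIntMY : ∀ n, Integrable (M n * Y n) μ := by
    intro n
    refine bint_aux μ ((hMmeas0 n).mul (hYmeas0 n)) ((((n:ℝ)+1) * K1) * K1) fun ω => ?_
    simp only [Pi.mul_apply]
    rw [abs_mul]
    exact mul_le_mul (hMabs n ω) (hYabs n ω) (abs_nonneg _) (by positivity)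
  have hIntMsq : ∀ n, Integrable (fun ω => (M n ω)^2) μ := by
    intro n
    refine bint_aux μ ((hMmeas0 n).pow_const 2) ((((n:ℝ)+1) * K1)^2) fun ω => ?_
    rw [abs_pow]
    exact pow_le_pow_left₀ (abs_nonneg _) (hMabs n ω) 2
  have hIntYsq : ∀ n, Integrable (fun ω => (Y n ω)^2) μ := by
    intro n
    refine bint_aux μ ((hYmeas0 n).pow_const 2) (K1^2) fun ω => ?_
    rw [abs_pow]
    exact pow_le_pow_left₀ (abs_nonneg _) (hYabs n ω) 2
  -- conditional expectation of Y
  have hcondY : ∀ n, μ[Y n | ℱ n] =ᵐ[μ] fun ω => M n ω / ((n:ℝ) + 1) := by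
    intro n
    have hde : Y n = ξ 0 • (fun ω => χ (n+1) ω 0) + ξ 1 • (fun ω => χ (n+1) ω 1) := by
      funext ω
      rw [hYdef]
      simp only [Pi.add_apply, Pi.smul_apply, smul_eq_mul]
      ring
    have h1 : μ[Y n | ℱ n] =ᵐ[μ]
        μ[ξ 0 • (fun ω => χ (n+1) ω 0) | ℱ n] + μ[ξ 1 • (fun ω => χ (n+1) ω 1) | ℱ n] := by
      rw [hde]
      exact condExp_add (Integrable.smul (ξ 0) (hIntχ n 0)) (Integrable.smul (ξ 1) (hIntχ n 1)) (ℱ n)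
    have h2 := condExp_smul (μ := μ) (m := ℱ n) (ξ 0) (fun ω => χ (n+1) ω 0)
    have h3 := condExp_smul (μ := μ) (m := ℱ n) (ξ 1) (fun ω => χ (n+1) ω 1)
    filter_upwards [h1, h2, h3, hdraw n 0, hdraw n 1] with ω e1 e2 e3 d0 d1
    rw [e1]
    simp only [Pi.add_apply, Pi.smul_apply, smul_eq_mul] at e2 e3 ⊢
    rw [e2, e3, d0, d1, hM2]
    push_cast
    field_simp
  -- ==================== Martingale part ====================
  have hmart : Martingale (fun n ω => M n ω / Pr n) ℱ μ := by
    apply martingale_nat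
    · intro n
      exact ((hMmeas n).div_const (Pr n)).stronglyMeasurable
    · intro n
      refine bint_aux μ ((hMmeas0 n).div_const _) ((((n:ℝ)+1) * K1) / Pr n) fun ω => ?_
      rw [abs_div, abs_of_pos (hPrpos n)]
      exact div_le_div_of_nonneg_right (hMabs n ω) (hPrpos n).le
    · intro n
      have hre : (fun ω => M (n+1) ω / Pr (n+1))
          = (Pr (n+1))⁻¹ • ((M n) + (s*l) • (Y n)) := by
        funext ω
        simp only [Pi.smul_apply, Pi.add_apply, smul_eq_mul, hMstep n ω]
        rw [div_eq_inv_mul]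
      have h1 : μ[(fun ω => M (n+1) ω / Pr (n+1)) | ℱ n]
          =ᵐ[μ] (Pr (n+1))⁻¹ • μ[(M n) + (s*l) • (Y n) | ℱ n] := by
        rw [hre]; exact condExp_smul _ _ (ℱ n)
      have h2 : μ[(M n) + (s*l) • (Y n) | ℱ n]
          =ᵐ[μ] μ[M n | ℱ n] + μ[(s*l) • (Y n) | ℱ n] :=
        condExp_add (hIntM n) (Integrable.smul (s*l) (hIntY n)) (ℱ n)
      have h3 : μ[M n | ℱ n] = M n :=
        condExp_of_stronglyMeasurable (ℱ.le n) (hMmeas n).stronglyMeasurable (hIntM n)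
      have h4 := condExp_smul (μ := μ) (m := ℱ n) (s*l) (Y n)
      filter_upwards [h1, h2, h4, hcondY n] with ω e1 e2 e4 ec
      rw [e1]
      simp only [Pi.add_apply, Pi.smul_apply, smul_eq_mul] at e2 e4 ⊢
      rw [e2, e4, ec, h3, hPr_succ n]
      have hx := hn1' n
      have hy := (hPrpos n).ne'
      have hz : (1 + s * l / ((n:ℝ)+1)) ≠ 0 := by positivity
      field_simp
  -- ==================== L² bound part ====================
  set u : ℕ → ℝ := fun n => ∫ ω, (S n ω 0 + S n ω 1) ∂μ with hudef
  set v : ℕ → ℝ := fun n => ∫ ω, (M n ω)^2 ∂μ with hvdef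
  have hv_nn : ∀ n, 0 ≤ v n := fun n => by
    rw [hvdef]; exact integral_nonneg fun ω => sq_nonneg _
  have hu_nn : ∀ n, 0 ≤ u n := fun n => by
    rw [hudef]
    exact integral_nonneg fun ω => add_nonneg (hSnn n ω 0) (hSnn n ω 1)
  -- expectations of χ
  have hEχ : ∀ n (i : Fin 2), ∫ ω, χ (n+1) ω i ∂μ = (∫ ω, S n ω i ∂μ) / ((n:ℝ)+1) := by
    intro n i
    rw [← integral_condExp (ℱ.le n) (f := fun ω => χ (n+1) ω i) (μ := μ),
      integral_congr_ae (hdraw n i)]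
    push_cast
    exact integral_div _ _
  -- cross term
  have hcross : ∀ n, ∫ ω, M n ω * Y n ω ∂μ = (v n) / ((n:ℝ)+1) := by
    intro n
    have hmul : μ[M n * Y n | ℱ n] =ᵐ[μ] M n * μ[Y n | ℱ n] :=
      condExp_mul_of_stronglyMeasurable_left (hMmeas n).stronglyMeasurable (hIntMY n) (hIntY n)
    have hae : μ[M n * Y n | ℱ n] =ᵐ[μ] fun ω => (M n ω)^2 / ((n:ℝ)+1) := by
      filter_upwards [hmul, hcondY n] with ω e c
      rw [e]
      simp only [Pi.mul_apply]
      rw [c]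
      ring
    calc ∫ ω, M n ω * Y n ω ∂μ = ∫ ω, (M n * Y n) ω ∂μ := rfl
    _ = ∫ ω, (μ[M n * Y n | ℱ n]) ω ∂μ := (integral_condExp (ℱ.le n)).symm
    _ = ∫ ω, (M n ω)^2 / ((n:ℝ)+1) ∂μ := integral_congr_ae hae
    _ = (v n) / ((n:ℝ)+1) := by rw [hvdef]; exact integral_div _ _
  -- second moment of Y
  have hEY2 : ∀ n, ∫ ω, (Y n ω)^2 ∂μ
      = ξ 0 ^ 2 * ((∫ ω, S n ω 0 ∂μ) / ((n:ℝ)+1))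
        + ξ 1 ^ 2 * ((∫ ω, S n ω 1 ∂μ) / ((n:ℝ)+1)) := by
    intro n
    have i1 : Integrable (fun ω => ξ 0 ^ 2 * χ (n+1) ω 0) μ := (hIntχ n 0).const_mul _
    have i2 : Integrable (fun ω => ξ 1 ^ 2 * χ (n+1) ω 1) μ := (hIntχ n 1).const_mul _
    have eA : ∫ ω, (ξ 0 ^ 2 * χ (n+1) ω 0 + ξ 1 ^ 2 * χ (n+1) ω 1) ∂μ
        = (∫ ω, ξ 0 ^ 2 * χ (n+1) ω 0 ∂μ) + ∫ ω, ξ 1 ^ 2 * χ (n+1) ω 1 ∂μ :=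
      integral_add i1 i2
    have eB : ∫ ω, ξ 0 ^ 2 * χ (n+1) ω 0 ∂μ = ξ 0 ^ 2 * ∫ ω, χ (n+1) ω 0 ∂μ :=
      integral_const_mul _ _
    have eC : ∫ ω, ξ 1 ^ 2 * χ (n+1) ω 1 ∂μ = ξ 1 ^ 2 * ∫ ω, χ (n+1) ω 1 ∂μ :=
      integral_const_mul _ _
    rw [integral_congr_ae (Eventually.of_forall (hYsqpt n)), eA, eB, eC, hEχ n 0, hEχ n 1]
  have hES_le : ∀ n (i : Fin 2), ∫ ω, S n ω i ∂μ ≤ u n := by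
    intro n i
    rw [hudef]
    refine integral_mono (hIntS n i) (hIntSsum n) fun ω => ?_
    revert ω
    show ∀ ω, S n ω i ≤ S n ω 0 + S n ω 1
    revert i
    rw [Fin.forall_fin_two]
    constructor <;> intro ω
    · nlinarith [hSnn n ω 1]
    · nlinarith [hSnn n ω 0]
  have hES_nn : ∀ n (i : Fin 2), 0 ≤ ∫ ω, S n ω i ∂μ :=
    fun n i => integral_nonneg fun ω => hSnn n ω i
  have hEY2le : ∀ n, ∫ ω, (Y n ω)^2 ∂μ ≤ K2 * u n / ((n:ℝ)+1) := by
    intro n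
    rw [hEY2 n, hK2def]
    have h0 := hES_le n 0
    have h1 := hES_le n 1
    have h0' := hES_nn n 0
    have h1' := hES_nn n 1
    have hp := hn1 n
    have e : ξ 0 ^ 2 * ((∫ ω, S n ω 0 ∂μ) / ((n:ℝ)+1))
        + ξ 1 ^ 2 * ((∫ ω, S n ω 1 ∂μ) / ((n:ℝ)+1))
        = (ξ 0 ^ 2 * (∫ ω, S n ω 0 ∂μ) + ξ 1 ^ 2 * (∫ ω, S n ω 1 ∂μ)) / ((n:ℝ)+1) := by
      ring
    rw [e]
    have hup : ξ 0 ^ 2 * (∫ ω, S n ω 0 ∂μ) + ξ 1 ^ 2 * (∫ ω, S n ω 1 ∂μ)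
        ≤ (ξ 0 ^ 2 + ξ 1 ^ 2) * u n := by
      nlinarith [mul_le_mul_of_nonneg_left h0 (sq_nonneg (ξ 0)),
        mul_le_mul_of_nonneg_left h1 (sq_nonneg (ξ 1))]
    exact div_le_div_of_nonneg_right hup hp.le
  -- evolution of u
  have hu_step : ∀ n, u (n+1) = u n * (1 + s / ((n:ℝ)+1)) := by
    intro n
    have e : ∫ ω, (S (n+1) ω 0 + S (n+1) ω 1) ∂μ
        = ∫ ω, (S n ω 0 + S n ω 1 + s * (χ (n+1) ω 0 + χ (n+1) ω 1)) ∂μ := by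
      refine integral_congr_ae (Eventually.of_forall fun ω => ?_)
      show S (n+1) ω 0 + S (n+1) ω 1 = S n ω 0 + S n ω 1 + s * (χ (n+1) ω 0 + χ (n+1) ω 1)
      exact hSsum_step n ω
    have e2 : ∫ ω, (S n ω 0 + S n ω 1 + s * (χ (n+1) ω 0 + χ (n+1) ω 1)) ∂μ
        = u n + s * ((∫ ω, χ (n+1) ω 0 ∂μ) + ∫ ω, χ (n+1) ω 1 ∂μ) := by
      have iχs : Integrable (fun ω => s * (χ (n+1) ω 0 + χ (n+1) ω 1)) μ :=
        ((hIntχ n 0).add (hIntχ n 1)).const_mul s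
      have eA : ∫ ω, (S n ω 0 + S n ω 1 + s * (χ (n+1) ω 0 + χ (n+1) ω 1)) ∂μ
          = (∫ ω, (S n ω 0 + S n ω 1) ∂μ) + ∫ ω, s * (χ (n+1) ω 0 + χ (n+1) ω 1) ∂μ :=
        integral_add (hIntSsum n) iχs
      have eB : ∫ ω, s * (χ (n+1) ω 0 + χ (n+1) ω 1) ∂μ
          = s * ∫ ω, (χ (n+1) ω 0 + χ (n+1) ω 1) ∂μ := integral_const_mul _ _
      have eC : ∫ ω, (χ (n+1) ω 0 + χ (n+1) ω 1) ∂μ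
          = (∫ ω, χ (n+1) ω 0 ∂μ) + ∫ ω, χ (n+1) ω 1 ∂μ :=
        integral_add (hIntχ n 0) (hIntχ n 1)
      have eD : u n = ∫ ω, (S n ω 0 + S n ω 1) ∂μ := by rw [hudef]
      rw [eA, eB, eC, eD]
    have e3 : u n = (∫ ω, S n ω 0 ∂μ) + ∫ ω, S n ω 1 ∂μ := by
      rw [hudef]; exact integral_add (hIntS n 0) (hIntS n 1)
    have e4 : u (n+1) = ∫ ω, (S (n+1) ω 0 + S (n+1) ω 1) ∂μ := by rw [hudef]
    rw [e4, e, e2, hEχ n 0, hEχ n 1, e3]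
    field_simp
  have hu0 : u 0 ≤ 1 := by
    have h : ∫ ω, (S 0 ω 0 + S 0 ω 1) ∂μ ≤ ∫ _ω, (1:ℝ) ∂μ := by
      refine integral_mono (hIntSsum 0) (integrable_const 1) fun ω => ?_
      have := hStot 0 ω
      push_cast at this
      linarith
    have h2 : u 0 = ∫ ω, (S 0 ω 0 + S 0 ω 1) ∂μ := by rw [hudef]
    rw [h2]
    simpa using h
  have hu_le : ∀ n, u n ≤ Pp n := by
    intro n
    induction n with
    | zero => rw [hPp0]; exact hu0
    | succ n ih =>
      rw [hu_step n, hPp_succ n]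
      have hf : (0:ℝ) ≤ 1 + s / ((n:ℝ)+1) := le_trans zero_le_one (hfacp1 n)
      exact mul_le_mul_of_nonneg_right ih hf
  -- evolution of v
  have hv_step : ∀ n, v (n+1)
      = v n + 2*(s*l)*(v n / ((n:ℝ)+1)) + (s*l)^2 * ∫ ω, (Y n ω)^2 ∂μ := by
    intro n
    have e : ∫ ω, (M (n+1) ω)^2 ∂μ
        = ∫ ω, ((M n ω)^2 + (2*(s*l)) * (M n ω * Y n ω) + (s*l)^2 * (Y n ω)^2) ∂μ := by
      refine integral_congr_ae (Eventually.of_forall fun ω => ?_)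
      show (M (n+1) ω)^2 = (M n ω)^2 + (2*(s*l)) * (M n ω * Y n ω) + (s*l)^2 * (Y n ω)^2
      rw [hMstep n ω]; ring
    have i1 : Integrable (fun ω => (2*(s*l)) * (M n ω * Y n ω)) μ := (hIntMY n).const_mul _
    have i2 : Integrable (fun ω => (s*l)^2 * (Y n ω)^2) μ := (hIntYsq n).const_mul _
    have eA : ∫ ω, ((M n ω)^2 + (2*(s*l)) * (M n ω * Y n ω) + (s*l)^2 * (Y n ω)^2) ∂μ
        = (∫ ω, ((M n ω)^2 + (2*(s*l)) * (M n ω * Y n ω)) ∂μ) + ∫ ω, (s*l)^2 * (Y n ω)^2 ∂μ :=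
      integral_add ((hIntMsq n).add i1) i2
    have eB : ∫ ω, ((M n ω)^2 + (2*(s*l)) * (M n ω * Y n ω)) ∂μ
        = (∫ ω, (M n ω)^2 ∂μ) + ∫ ω, (2*(s*l)) * (M n ω * Y n ω) ∂μ :=
      integral_add (hIntMsq n) i1
    have eC : ∫ ω, (2*(s*l)) * (M n ω * Y n ω) ∂μ = (2*(s*l)) * ∫ ω, M n ω * Y n ω ∂μ :=
      integral_const_mul _ _
    have eD : ∫ ω, (s*l)^2 * (Y n ω)^2 ∂μ = (s*l)^2 * ∫ ω, (Y n ω)^2 ∂μ :=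
      integral_const_mul _ _
    have e4 : v (n+1) = ∫ ω, (M (n+1) ω)^2 ∂μ := by rw [hvdef]
    have e6 : v n = ∫ ω, (M n ω)^2 ∂μ := by rw [hvdef]
    rw [e4, e, eA, eB, eC, eD, hcross n, ← e6]
  -- constants
  set eps : ℝ := s * (2*l - 1) with hepsdef
  have heps : 0 < eps := by
    rw [hepsdef]
    have h2l : (0:ℝ) < 2*l - 1 := by linarith only [hl]
    exact mul_pos hs0 h2l
  set C0 : ℝ := (1 + s*l)^2 / eps with hC0def
  have hC0nn : 0 ≤ C0 := by rw [hC0def]; positivity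
  set c : ℝ := (s*l)^2 * K2 with hcdef
  have hcnn : 0 ≤ c := by rw [hcdef]; positivity
  set R : ℕ → ℝ := fun k => Pp k / (Pr k)^2 with hRdef
  have hRpos : ∀ k, 0 < R k := fun k => by
    rw [hRdef]; exact div_pos (hPppos k) (pow_pos (hPrpos k) 2)
  -- one-step inequality for v / Pr^2
  have hb_step : ∀ n, v (n+1) / (Pr (n+1))^2
      ≤ v n / (Pr n)^2 + c * (Pp n / (((n:ℝ)+1) * (Pr n)^2)) := by
    intro n
    have hx := hn1 n
    have hPrp := hPrpos n
    have hPrp' := hPrpos (n+1)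
    have e1 : v (n+1) ≤ v n * (1 + 2*(s*l)/((n:ℝ)+1)) + c * (Pp n / ((n:ℝ)+1)) := by
      rw [hv_step n]
      have t1 : (s*l)^2 * (∫ ω, (Y n ω)^2 ∂μ) ≤ (s*l)^2 * (K2 * u n / ((n:ℝ)+1)) :=
        mul_le_mul_of_nonneg_left (hEY2le n) (sq_nonneg _)
      have t2 : (s*l)^2 * (K2 * u n / ((n:ℝ)+1)) ≤ (s*l)^2 * (K2 * Pp n / ((n:ℝ)+1)) := by
        gcongr
        exact hu_le n
      have hr1 : v n + 2*(s*l)*(v n / ((n:ℝ)+1)) = v n * (1 + 2*(s*l)/((n:ℝ)+1)) := by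
        field_simp
      have hr2 : (s*l)^2 * (K2 * Pp n / ((n:ℝ)+1)) = c * (Pp n / ((n:ℝ)+1)) := by
        rw [hcdef]; field_simp
      linarith
    have e2 : v (n+1) / (Pr (n+1))^2
        ≤ (v n * (1 + 2*(s*l)/((n:ℝ)+1)) + c * (Pp n / ((n:ℝ)+1))) / (Pr (n+1))^2 :=
      div_le_div_of_nonneg_right e1 (pow_pos hPrp' 2).le
    have e3 : (v n * (1 + 2*(s*l)/((n:ℝ)+1))) / (Pr (n+1))^2 ≤ v n / (Pr n)^2 := by
      have ha0 : (0:ℝ) ≤ s*l/((n:ℝ)+1) := by positivity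
      have hnum : v n * (1 + 2*(s*l)/((n:ℝ)+1)) ≤ v n * (1 + s*l/((n:ℝ)+1))^2 := by
        refine mul_le_mul_of_nonneg_left ?_ (hv_nn n)
        have key : 2*(s*l)/((n:ℝ)+1) = 2*(s*l/((n:ℝ)+1)) := by ring
        rw [key]
        nlinarith only [sq_nonneg (s*l/((n:ℝ)+1))]
      have hden : (0:ℝ) < (Pr (n+1))^2 := pow_pos hPrp' 2
      calc (v n * (1 + 2*(s*l)/((n:ℝ)+1))) / (Pr (n+1))^2
          ≤ (v n * (1 + s*l/((n:ℝ)+1))^2) / (Pr (n+1))^2 :=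
            div_le_div_of_nonneg_right hnum hden.le
      _ = v n / (Pr n)^2 := by
          rw [hPr_succ n, mul_pow]
          have hne1 : (Pr n) ≠ 0 := hPrp.ne'
          have hne2 : (1 + s*l/((n:ℝ)+1)) ≠ 0 := by positivity
          field_simp
    have e4 : (c * (Pp n / ((n:ℝ)+1))) / (Pr (n+1))^2 ≤ c * (Pp n / (((n:ℝ)+1) * (Pr n)^2)) := by
      have hPrle : (Pr n)^2 ≤ (Pr (n+1))^2 := by
        rw [hPr_succ n, mul_pow]
        have h1 : (1:ℝ) ≤ (1 + s * l / ((n:ℝ)+1))^2 :=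
          one_le_pow₀ (by linarith only [hfac1 n])
        calc (Pr n)^2 = (Pr n)^2 * 1 := by ring
        _ ≤ (Pr n)^2 * (1 + s * l / ((n:ℝ)+1))^2 := mul_le_mul_of_nonneg_left h1 (sq_nonneg _)
      have eL : (c * (Pp n / ((n:ℝ)+1))) / (Pr (n+1))^2
          = c * (Pp n / (((n:ℝ)+1) * (Pr (n+1))^2)) := by
        field_simp
      have h2 : Pp n / (((n:ℝ)+1) * (Pr (n+1))^2) ≤ Pp n / (((n:ℝ)+1) * (Pr n)^2) := by
        refine div_le_div_of_nonneg_left (hPppos n).le (by positivity) ?_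
        exact mul_le_mul_of_nonneg_left hPrle (hn1 n).le
      calc (c * (Pp n / ((n:ℝ)+1))) / (Pr (n+1))^2
          = c * (Pp n / (((n:ℝ)+1) * (Pr (n+1))^2)) := eL
      _ ≤ c * (Pp n / (((n:ℝ)+1) * (Pr n)^2)) := mul_le_mul_of_nonneg_left h2 hcnn
    calc v (n+1) / (Pr (n+1))^2
        ≤ (v n * (1 + 2*(s*l)/((n:ℝ)+1)) + c * (Pp n / ((n:ℝ)+1))) / (Pr (n+1))^2 := e2
    _ = (v n * (1 + 2*(s*l)/((n:ℝ)+1))) / (Pr (n+1))^2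
        + (c * (Pp n / ((n:ℝ)+1))) / (Pr (n+1))^2 := add_div _ _ _
    _ ≤ v n / (Pr n)^2 + c * (Pp n / (((n:ℝ)+1) * (Pr n)^2)) := add_le_add e3 e4
  -- telescoping bound on the sum
  have hR_succ : ∀ k : ℕ, R (k+1) = R k * ((1 + s/((k:ℝ)+1)) / (1 + s*l/((k:ℝ)+1))^2) := by
    intro k
    have eR1 : R (k+1) = Pp (k+1) / (Pr (k+1))^2 := by rw [hRdef]
    have eR0 : R k = Pp k / (Pr k)^2 := by rw [hRdef]
    rw [eR1, eR0, hPp_succ k, hPr_succ k, mul_pow]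
    have h1 : (Pr k) ≠ 0 := (hPrpos k).ne'
    have h2 : (1 + s*l/((k:ℝ)+1)) ≠ 0 := by positivity
    field_simp
  have hdle : ∀ k : ℕ, Pp k / (((k:ℝ)+1) * (Pr k)^2) ≤ C0 * (R k - R (k+1)) := by
    intro k
    have hx : (0:ℝ) < (k:ℝ)+1 := hn1 k
    have hx1 : (1:ℝ) ≤ (k:ℝ)+1 := by
      have : (0:ℝ) ≤ (k:ℝ) := Nat.cast_nonneg k
      linarith
    have hscalar : 1 / ((k:ℝ)+1) ≤ C0 * (1 - (1 + s/((k:ℝ)+1)) / (1 + s*l/((k:ℝ)+1))^2) := by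
      have ha : (0:ℝ) < 1 + s*l/((k:ℝ)+1) := by positivity
      have hb1 : s*l/((k:ℝ)+1) ≤ s*l := by
        rw [div_le_iff₀ hx]
        nlinarith only [mul_nonneg hsl.le (sub_nonneg.mpr hx1), hx1, hsl]
      have hnum : eps / ((k:ℝ)+1) ≤ (1 + s*l/((k:ℝ)+1))^2 - (1 + s/((k:ℝ)+1)) := by
        have e : (1 + s*l/((k:ℝ)+1))^2 - (1 + s/((k:ℝ)+1))
            = (2*(s*l) - s)/((k:ℝ)+1) + (s*l/((k:ℝ)+1))^2 := by
          field_simp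
          ring
        rw [e, hepsdef]
        have e2 : s * (2*l - 1) = 2*(s*l) - s := by ring
        rw [e2]
        nlinarith only [sq_nonneg (s*l/((k:ℝ)+1))]
      have hden : (1 + s*l/((k:ℝ)+1))^2 ≤ (1 + s*l)^2 :=
        pow_le_pow_left₀ (by positivity) (by linarith only [hb1]) 2
      have h1r : 1 - (1 + s/((k:ℝ)+1)) / (1 + s*l/((k:ℝ)+1))^2
          = ((1 + s*l/((k:ℝ)+1))^2 - (1 + s/((k:ℝ)+1))) / (1 + s*l/((k:ℝ)+1))^2 := by
        field_simp
      rw [h1r]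
      have step1 : (eps / ((k:ℝ)+1)) / (1 + s*l)^2
          ≤ ((1 + s*l/((k:ℝ)+1))^2 - (1 + s/((k:ℝ)+1))) / (1 + s*l/((k:ℝ)+1))^2 :=
        div_le_div₀ (le_trans (by positivity) hnum) hnum (by positivity) hden
      have step2 : C0 * ((eps / ((k:ℝ)+1)) / (1 + s*l)^2) = 1 / ((k:ℝ)+1) := by
        rw [hC0def]
        have hne : (1 + s*l) ≠ 0 := by positivity
        field_simp
      calc 1 / ((k:ℝ)+1) = C0 * ((eps / ((k:ℝ)+1)) / (1 + s*l)^2) := step2.symm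
      _ ≤ C0 * (((1 + s*l/((k:ℝ)+1))^2 - (1 + s/((k:ℝ)+1))) / (1 + s*l/((k:ℝ)+1))^2) :=
          mul_le_mul_of_nonneg_left step1 hC0nn
    have hRk := (hRpos k).le
    have e : Pp k / (((k:ℝ)+1) * (Pr k)^2) = R k * (1/((k:ℝ)+1)) := by
      have eR0 : R k = Pp k / (Pr k)^2 := by rw [hRdef]
      rw [eR0]
      field_simp
    have e2 : C0 * (R k - R (k+1))
        = R k * (C0 * (1 - (1 + s/((k:ℝ)+1)) / (1 + s*l/((k:ℝ)+1))^2)) := by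
      rw [hR_succ k]
      ring
    rw [e, e2]
    exact mul_le_mul_of_nonneg_left hscalar hRk
  have hsum : ∀ n, ∑ k ∈ Finset.range n, Pp k / (((k:ℝ)+1) * (Pr k)^2) ≤ C0 := by
    intro n
    have hR0 : R 0 = 1 := by
      have eR0 : R 0 = Pp 0 / (Pr 0)^2 := by rw [hRdef]
      rw [eR0, hPp0, hPr0]; norm_num
    calc ∑ k ∈ Finset.range n, Pp k / (((k:ℝ)+1) * (Pr k)^2)
        ≤ ∑ k ∈ Finset.range n, C0 * (R k - R (k+1)) :=
          Finset.sum_le_sum fun k _ => hdle k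
    _ = C0 * ∑ k ∈ Finset.range n, (R k - R (k+1)) := (Finset.mul_sum _ _ _).symm
    _ = C0 * (R 0 - R n) := by rw [Finset.sum_range_sub' R n]
    _ ≤ C0 * R 0 := mul_le_mul_of_nonneg_left (by linarith only [hRpos n]) hC0nn
    _ = C0 := by rw [hR0, mul_one]
  -- induction
  have hmain : ∀ n, v n / (Pr n)^2
      ≤ v 0 + c * ∑ k ∈ Finset.range n, Pp k / (((k:ℝ)+1) * (Pr k)^2) := by
    intro n
    induction n with
    | zero => simp [hPr0]
    | succ n ih =>
      have hbs := hb_step n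
      rw [Finset.sum_range_succ, mul_add]
      linarith only [ih, hbs]
  have hv0 : v 0 ≤ K1^2 := by
    have hb : ∀ ω, (M 0 ω)^2 ≤ K1^2 := by
      intro ω
      have h1 : |M 0 ω| ≤ K1 := by
        have := hMabs 0 ω
        simpa using this
      calc (M 0 ω)^2 = |M 0 ω|^2 := (sq_abs _).symm
      _ ≤ K1^2 := pow_le_pow_left₀ (abs_nonneg _) h1 2
    have h2 : ∫ ω, (M 0 ω)^2 ∂μ ≤ ∫ _ω, (K1^2 : ℝ) ∂μ :=
      integral_mono (hIntMsq 0) (integrable_const _) hb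
    have h3 : v 0 = ∫ ω, (M 0 ω)^2 ∂μ := by rw [hvdef]
    rw [h3]
    simpa using h2
  -- conclusion
  refine ⟨hmart, K1^2 + c * C0, fun n => ?_⟩
  have e : ∫ ω, (M n ω / Pr n)^2 ∂μ = v n / (Pr n)^2 := by
    have h3 : v n = ∫ ω, (M n ω)^2 ∂μ := by rw [hvdef]
    rw [h3, ← integral_div]
    refine integral_congr_ae (Eventually.of_forall fun ω => ?_)
    show (M n ω / Pr n)^2 = (M n ω)^2 / (Pr n)^2
    rw [div_pow]
  show ∫ ω, (M n ω / Pr n)^2 ∂μ ≤ K1^2 + c * C0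
  rw [e]
  have h2 : c * ∑ k ∈ Finset.range n, Pp k / (((k:ℝ)+1) * (Pr k)^2) ≤ c * C0 :=
    mul_le_mul_of_nonneg_left (hsum n) hcnn
  exact le_trans (hmain n) (add_le_add hv0 h2)
end

section
/- Let R be the 3×3 matrix [[s, (1-s)p],[0, P]] as in (3) with 0 < s < 1, P a 2×2 irreducible stochastic matrix with non-principal eigenvalue λ, and eigenvector ξ of P for λ. If λ = s, then R is diagonalizable if and only if pξ = 0, and in that case p = π_P, the stationary distribution of P. -/
/-- For `R = [[s,(1-s)p],[0,P]]` with `λ = s` (i.e. `Pξ = sξ`): `R` is diagonalizable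
(has three linearly independent eigenvectors) if and only if `pξ = 0`, and in that
case `p = π_P`, the stationary distribution of `P`. -/
theorem stmt_13 (s : ℝ) (p ξ πP : Fin 2 → ℝ) (P : Matrix (Fin 2) (Fin 2) ℝ)
    (hs0 : 0 < s) (hs1 : s < 1)
    (hp : ∀ i, 0 ≤ p i) (hpsum : p 0 + p 1 = 1)
    (hPnn : ∀ i j, 0 ≤ P i j) (hProw : ∀ i, ∑ j, P i j = 1)
    (hirr : 0 < P 0 1 ∧ 0 < P 1 0)
    (hξ : P.mulVec ξ = s • ξ) (hξ0 : ξ ≠ 0)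
    (hπ : Matrix.vecMul πP P = πP) (hπnn : ∀ i, 0 ≤ πP i) (hπsum : πP 0 + πP 1 = 1)
    (R : Matrix (Fin 3) (Fin 3) ℝ)
    (hR : R = !![s, (1 - s) * p 0, (1 - s) * p 1;
                 0, P 0 0, P 0 1;
                 0, P 1 0, P 1 1]) :
    ((∃ (v : Fin 3 → Fin 3 → ℝ) (e : Fin 3 → ℝ),
        LinearIndependent ℝ v ∧ ∀ i, R.mulVec (v i) = e i • v i) ↔
      p 0 * ξ 0 + p 1 * ξ 1 = 0) ∧
    (p 0 * ξ 0 + p 1 * ξ 1 = 0 → p = πP) := by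
  subst hR
  obtain ⟨hq, hr⟩ := hirr
  have hP00 : P 0 0 = 1 - P 0 1 := by have := hProw 0; simp [Fin.sum_univ_two] at this; linarith
  have hP11 : P 1 1 = 1 - P 1 0 := by have := hProw 1; simp [Fin.sum_univ_two] at this; linarith
  -- component equations of the eigenvector ξ
  have hξ1 : (1 - P 0 1) * ξ 0 + P 0 1 * ξ 1 = s * ξ 0 := by
    have := congrFun hξ 0
    simp [Matrix.mulVec, dotProduct, Fin.sum_univ_two, hP00] at this
    linarith
  have hξ2 : P 1 0 * ξ 0 + (1 - P 1 0) * ξ 1 = s * ξ 1 := by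
    have := congrFun hξ 1
    simp [Matrix.mulVec, dotProduct, Fin.sum_univ_two, hP11] at this
    linarith
  -- key structural facts
  have hF1 : P 1 0 * ξ 0 + P 0 1 * ξ 1 = 0 := by
    have h : (1 - s) * (P 1 0 * ξ 0 + P 0 1 * ξ 1) = 0 := by
      linear_combination P 1 0 * hξ1 + P 0 1 * hξ2
    rcases mul_eq_zero.1 h with h' | h'
    · linarith
    · exact h'
  have hx0 : ξ 0 ≠ 0 := by
    intro h0
    have h1 : ξ 1 = 0 := by
      have : P 0 1 * ξ 1 = 0 := by linear_combination hF1 - P 1 0 * h0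
      rcases mul_eq_zero.1 this with h | h
      · linarith
      · exact h
    exact hξ0 (by funext i; fin_cases i <;> simp [h0, h1])
  have hξne : ξ 0 - ξ 1 ≠ 0 := by
    intro h
    apply hx0
    have : (P 0 1 + P 1 0) * ξ 0 = 0 := by linear_combination hF1 + P 0 1 * h
    rcases mul_eq_zero.1 this with h' | h'
    · linarith
    · exact h'
  have hF2 : s = 1 - P 0 1 - P 1 0 := by
    have h : (1 - P 0 1 - P 1 0 - s) * (ξ 0 - ξ 1) = 0 := by linear_combination hξ1 - hξ2
    rcases mul_eq_zero.1 h with h' | h'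
    · linarith
    · exact absurd h' hξne
  have hπ0 : πP 0 * P 0 1 = πP 1 * P 1 0 := by
    have := congrFun hπ 0
    simp [Matrix.vecMul, dotProduct, Fin.sum_univ_two, hP00] at this
    linarith
  constructor
  · constructor
    · -- forward: diagonalizable → p·ξ = 0
      rintro ⟨v, e, hli, hev⟩
      by_contra hne
      have hdet : p 0 * P 0 1 - p 1 * P 1 0 ≠ 0 := by
        intro h
        apply hne
        have h2 : P 0 1 * (p 0 * ξ 0 + p 1 * ξ 1) = 0 := by
          linear_combination ξ 0 * h + p 1 * hF1
        rcases mul_eq_zero.1 h2 with h' | h'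
        · linarith
        · exact h'
      have hmem : ∀ i, v i ∈ Submodule.span ℝ
          (Set.range ![(![1,0,0] : Fin 3 → ℝ), ![1,1,1]]) := by
        intro i
        have E0 := congrFun (hev i) 0
        have E1 := congrFun (hev i) 1
        have E2 := congrFun (hev i) 2
        simp [Matrix.mulVec, dotProduct, Fin.sum_univ_three, hP00, hP11] at E0 E1 E2
        have hpair : ∃ a b : ℝ, a • (![1,0,0] : Fin 3 → ℝ) + b • ![1,1,1] = v i := by
          have hA : (e i - 1) * (P 1 0 * v i 1 + P 0 1 * v i 2) = 0 := by
            linear_combination (-(P 1 0)) * E1 + (-(P 0 1)) * E2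
          have hB : (s - e i) * (v i 1 - v i 2) = 0 := by
            linear_combination E1 - E2 + (v i 1 - v i 2) * hF2
          by_cases hes : e i = s
          · have h1 : P 1 0 * v i 1 + P 0 1 * v i 2 = 0 := by
              rcases mul_eq_zero.1 hA with h' | h'
              · rw [hes] at h'; linarith
              · exact h'
            have h2 : p 0 * v i 1 + p 1 * v i 2 = 0 := by
              have : (1 - s) * (p 0 * v i 1 + p 1 * v i 2) = 0 := by
                rw [hes] at E0; linear_combination E0
              rcases mul_eq_zero.1 this with h' | h'
              · linarith
              · exact h'
            have hv1 : v i 1 = 0 := by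
              have h3 : (p 0 * P 0 1 - p 1 * P 1 0) * v i 1 = 0 := by
                linear_combination P 0 1 * h2 - p 1 * h1
              exact (mul_eq_zero.1 h3).resolve_left hdet
            have hv2 : v i 2 = 0 := by
              have : P 0 1 * v i 2 = 0 := by linear_combination h1 - P 1 0 * hv1
              exact (mul_eq_zero.1 this).resolve_left (by linarith)
            exact ⟨v i 0, 0, by funext j; fin_cases j <;> simp [hv1, hv2]⟩
          · have h12 : v i 1 = v i 2 := by
              rcases mul_eq_zero.1 hB with h' | h'
              · exact absurd (by linarith : e i = s) hes
              · linarith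
            by_cases he1 : e i = 1
            · have h01 : v i 0 = v i 1 := by
                rw [he1] at E0
                have h : (1 - s) * (v i 1 - v i 0) = 0 := by
                  linear_combination E0 + (1 - s) * p 1 * h12 - (1 - s) * v i 1 * hpsum
                rcases mul_eq_zero.1 h with h' | h'
                · linarith
                · linarith
              exact ⟨0, v i 0, by funext j; fin_cases j <;> simp [h01, h12] <;> linarith⟩
            · have hv1 : v i 1 = 0 := by
                have h : (1 - e i) * v i 1 = 0 := by linear_combination E1 + P 0 1 * h12
                rcases mul_eq_zero.1 h with h' | h'
                · exact absurd (by linarith : e i = 1) he1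
                · exact h'
              have hv2 : v i 2 = 0 := h12 ▸ hv1
              have hv0 : v i 0 = 0 := by
                have h : (s - e i) * v i 0 = 0 := by
                  linear_combination E0 - (1 - s) * p 0 * hv1 - (1 - s) * p 1 * hv2
                rcases mul_eq_zero.1 h with h' | h'
                · exact absurd (by linarith : e i = s) hes
                · exact h'
              exact ⟨0, 0, by funext j; fin_cases j <;> simp [hv0, hv1, hv2]⟩
        obtain ⟨a, b, hab⟩ := hpair
        rw [Submodule.mem_span_range_iff_exists_fun]
        exact ⟨![a, b], by simpa [Fin.sum_univ_two] using hab⟩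
      have h3 : Module.finrank ℝ (Submodule.span ℝ (Set.range v)) = 3 := by
        simpa using finrank_span_eq_card hli
      have hle : Submodule.span ℝ (Set.range v) ≤
          Submodule.span ℝ (Set.range ![(![1,0,0] : Fin 3 → ℝ), ![1,1,1]]) :=
        Submodule.span_le.2 (Set.range_subset_iff.2 hmem)
      have hmono := Submodule.finrank_mono hle
      have h2 : Module.finrank ℝ
          (Submodule.span ℝ (Set.range ![(![1,0,0] : Fin 3 → ℝ), ![1,1,1]])) ≤ 2 := by
        simpa [Set.finrank] using finrank_range_le_card (R := ℝ) ![(![1,0,0] : Fin 3 → ℝ), ![1,1,1]]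
      have h4 := hmono.trans h2
      rw [h3] at h4
      omega
    · -- backward: p·ξ = 0 → diagonalizable
      intro hkey
      refine ⟨fun i => !![(1:ℝ),0,0; 0, ξ 0, ξ 1; 1,1,1] i, ![s, s, 1], ?_, ?_⟩
      · refine (Matrix.linearIndependent_rows_iff_isUnit (A := !![(1:ℝ),0,0; 0, ξ 0, ξ 1; 1,1,1])).2 ?_
        rw [Matrix.isUnit_iff_isUnit_det,
          isUnit_iff_ne_zero]
        rw [Matrix.det_fin_three]
        simp
        intro h
        exact hξne (by linarith)
      · intro i
        fin_cases i <;> funext j <;> fin_cases j <;>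
          simp [Matrix.mulVec, dotProduct, Fin.sum_univ_three, hP00, hP11] <;> ring_nf <;>
          nlinarith [hξ1, hξ2, hkey, hpsum]
  · -- p·ξ = 0 → p = πP
    intro hkey
    have hpq : p 0 * P 0 1 = p 1 * P 1 0 := by
      have h : (p 0 * P 0 1 - p 1 * P 1 0) * ξ 0 = 0 := by
        linear_combination P 0 1 * hkey - p 1 * hF1
      have := (mul_eq_zero.1 h).resolve_right hx0
      linarith
    have h0 : p 0 = πP 0 := by
      have h : (p 0 - πP 0) * (P 0 1 + P 1 0) = 0 := by
        linear_combination hpq - hπ0 + P 1 0 * hpsum - P 1 0 * hπsum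
      rcases mul_eq_zero.1 h with h' | h'
      · linarith
      · linarith
    funext i
    fin_cases i
    · exact h0
    · simpa using (by linarith : p 1 = πP 1)
end

section
/- In the three-color urn model with diagonalizable replacement matrix R given by (3), with eigenvector v₂ of R for eigenvalue λ > 1/2, the process Z_n = C_nv₂ / Π_n(λ) is an L²-bounded martingale, and C_nv₂/n^λ converges almost surely. -/
open Filter Finset

namespace UrnAux

variable {l : ℝ}

noncomputable def Pprod (l : ℝ) (n : ℕ) : ℝ := ∏ j ∈ Finset.range n, (1 + l / (j + 1))

lemma fact_pos (hl : 0 < l) (j : ℕ) : (0:ℝ) < 1 + l / (j + 1) := by positivity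

lemma Pprod_pos (hl : 0 < l) (n : ℕ) : 0 < Pprod l n :=
  Finset.prod_pos fun j _ => fact_pos hl j

lemma Pprod_succ (l : ℝ) (n : ℕ) :
    Pprod l (n + 1) = Pprod l n * (1 + l / (n + 1)) :=
  Finset.prod_range_succ _ _

/-- g n = Pprod l n / (n+1)^l is monotone. -/
lemma g_mono (hl0 : 0 < l) (hl1 : l ≤ 1) :
    Monotone (fun n : ℕ => Pprod l n / ((n : ℝ) + 1) ^ l) := by
  apply monotone_nat_of_le_succ
  intro n
  have hx : (0:ℝ) < (n:ℝ) + 1 := by positivity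
  have hx2 : (0:ℝ) < (n:ℝ) + 2 := by positivity
  have hnn : (0:ℝ) ≤ 1 / ((n:ℝ)+1) := by positivity
  have hb : ((1:ℝ) + 1 / ((n:ℝ) + 1)) ^ l ≤ 1 + l * (1 / ((n:ℝ)+1)) :=
    rpow_one_add_le_one_add_mul_self (by linarith) hl0.le hl1
  have hkey : ((n:ℝ) + 2) ^ l ≤ (1 + l / ((n:ℝ) + 1)) * ((n:ℝ) + 1) ^ l := by
    have h1 : ((n:ℝ) + 2) = (1 + 1 / ((n:ℝ)+1)) * ((n:ℝ)+1) := by field_simp; ring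
    rw [h1, Real.mul_rpow (by positivity) hx.le]
    have := mul_le_mul_of_nonneg_right hb (Real.rpow_nonneg hx.le l)
    calc ((1:ℝ) + 1 / ((n:ℝ)+1)) ^ l * ((n:ℝ)+1) ^ l
        ≤ (1 + l * (1 / ((n:ℝ)+1))) * ((n:ℝ)+1) ^ l := this
      _ = (1 + l / ((n:ℝ)+1)) * ((n:ℝ)+1) ^ l := by ring_nf
  have hP : 0 < Pprod l n := Pprod_pos hl0 n
  rw [div_le_div_iff₀ (by positivity) (by positivity)]
  push_cast
  calc Pprod l n * ((n:ℝ) + 1 + 1) ^ l = Pprod l n * ((n:ℝ) + 2) ^ l := by ring_nf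
    _ ≤ Pprod l n * ((1 + l / ((n:ℝ) + 1)) * ((n:ℝ) + 1) ^ l) :=
        mul_le_mul_of_nonneg_left hkey hP.le
    _ = Pprod l (n + 1) * ((n:ℝ) + 1) ^ l := by rw [Pprod_succ]; push_cast; ring

lemma one_le_g (hl0 : 0 < l) (hl1 : l ≤ 1) (n : ℕ) :
    1 ≤ Pprod l n / ((n : ℝ) + 1) ^ l := by
  have := g_mono hl0 hl1 (Nat.zero_le n)
  simpa [Pprod] using this

lemma Pprod_ge (hl0 : 0 < l) (hl1 : l ≤ 1) (n : ℕ) :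
    ((n : ℝ) + 1) ^ l ≤ Pprod l n := by
  have h := one_le_g hl0 hl1 n
  have hx : (0:ℝ) < ((n:ℝ)+1) ^ l := by positivity
  calc ((n:ℝ)+1)^l = 1 * ((n:ℝ)+1)^l := (one_mul _).symm
    _ ≤ (Pprod l n / ((n:ℝ)+1)^l) * ((n:ℝ)+1)^l := mul_le_mul_of_nonneg_right h hx.le
    _ = Pprod l n := by field_simp

/-- sum of 1/(j+1)^2 is bounded by 2. -/
lemma sum_sq_le (n : ℕ) : ∑ j ∈ Finset.range n, (1 / ((j:ℝ) + 1)) ^ 2 ≤ 2 - 2 / ((n:ℝ) + 1) := by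
  induction n with
  | zero => norm_num
  | succ n ih =>
    rw [Finset.sum_range_succ]
    have hx : (0:ℝ) < (n:ℝ) + 1 := by positivity
    have hx2 : (0:ℝ) < (n:ℝ) + 1 + 1 := by positivity
    have : (1 / ((n:ℝ) + 1)) ^ 2 ≤ 2 / ((n:ℝ)+1) - 2 / ((n:ℝ)+1+1) := by
      rw [div_sub_div _ _ (ne_of_gt hx) (ne_of_gt hx2)]
      rw [div_pow, div_le_div_iff₀ (by positivity) (by positivity)]
      ring_nf
      nlinarith [sq_nonneg ((n:ℝ)+1)]
    push_cast
    linarith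

/-- log(1+x) ≥ x/(1+x) for x ≥ 0. -/
lemma log_ge (x : ℝ) (hx : 0 ≤ x) : x / (1 + x) ≤ Real.log (1 + x) := by
  have h1 : (0:ℝ) < 1 + x := by linarith
  have := Real.log_le_sub_one_of_pos (x := (1+x)⁻¹) (by positivity)
  rw [Real.log_inv] at this
  have h2 : (1+x)⁻¹ - 1 = -(x / (1+x)) := by field_simp; ring
  linarith [this, h2 ▸ this]

/-- Key per-step bound: (1 + l*x) ≤ (1+x)^l * exp (l * x^2) for x ≥ 0, 0 < l ≤ 1. -/
lemma step_bound (hl0 : 0 < l) (hl1 : l ≤ 1) {x : ℝ} (hx : 0 ≤ x) :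
    1 + l * x ≤ (1 + x) ^ l * Real.exp (l * x ^ 2) := by
  have h1 : (0:ℝ) < 1 + x := by linarith
  have h2 : (0:ℝ) < 1 + l * x := by nlinarith
  have hlog1 : Real.log (1 + l * x) ≤ l * x := by
    have := Real.log_le_sub_one_of_pos h2
    linarith
  have hlog2 : x / (1 + x) ≤ Real.log (1 + x) := log_ge x hx
  have hfrac : x - x ^ 2 ≤ x / (1 + x) := by
    rw [le_div_iff₀ h1]; nlinarith [sq_nonneg x, mul_nonneg (mul_nonneg hx hx) hx]
  have key : Real.log (1 + l * x) ≤ l * Real.log (1 + x) + l * x ^ 2 := by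
    have : l * (x - x ^ 2) ≤ l * Real.log (1 + x) :=
      mul_le_mul_of_nonneg_left (le_trans hfrac hlog2) hl0.le
    nlinarith
  calc 1 + l * x = Real.exp (Real.log (1 + l * x)) := (Real.exp_log h2).symm
    _ ≤ Real.exp (l * Real.log (1 + x) + l * x ^ 2) := Real.exp_le_exp.2 key
    _ = Real.exp (Real.log (1 + x) * l) * Real.exp (l * x ^ 2) := by
        rw [← Real.exp_add]; ring_nf
    _ = (1 + x) ^ l * Real.exp (l * x ^ 2) := by
        rw [← Real.exp_log h1, ← Real.exp_mul, Real.exp_log h1]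

lemma Pprod_le (hl0 : 0 < l) (hl1 : l ≤ 1) (n : ℕ) :
    Pprod l n ≤ ((n : ℝ) + 1) ^ l * Real.exp (l * ∑ j ∈ Finset.range n, (1 / ((j:ℝ)+1)) ^ 2) := by
  induction n with
  | zero => simp [Pprod]
  | succ n ih =>
    have hx : (0:ℝ) < (n:ℝ) + 1 := by positivity
    have hstep := step_bound hl0 hl1 (x := 1 / ((n:ℝ)+1)) (by positivity)
    have hfp : (0:ℝ) < 1 + l / ((n:ℝ)+1) := fact_pos hl0 n
    rw [Pprod_succ, Finset.sum_range_succ]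
    have h1 : Pprod l n * (1 + l / ((n:ℝ)+1)) ≤
        (((n:ℝ)+1) ^ l * Real.exp (l * ∑ j ∈ Finset.range n, (1/((j:ℝ)+1))^2)) *
          (1 + l / ((n:ℝ)+1)) := mul_le_mul_of_nonneg_right ih hfp.le
    have h2 : (1 + l / ((n:ℝ)+1)) ≤ (1 + 1/((n:ℝ)+1)) ^ l * Real.exp (l * (1/((n:ℝ)+1)) ^ 2) := by
      have : l / ((n:ℝ)+1) = l * (1/((n:ℝ)+1)) := by ring
      rw [this]; exact hstep
    have h3 : ((n:ℝ)+1) ^ l * (1 + 1/((n:ℝ)+1)) ^ l = ((n:ℝ)+2) ^ l := by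
      rw [← Real.mul_rpow hx.le (by positivity)]
      congr 1; field_simp; ring
    calc Pprod l n * (1 + l / ((n:ℝ)+1))
        ≤ (((n:ℝ)+1) ^ l * Real.exp (l * ∑ j ∈ Finset.range n, (1/((j:ℝ)+1))^2)) *
            ((1 + 1/((n:ℝ)+1)) ^ l * Real.exp (l * (1/((n:ℝ)+1)) ^ 2)) := by
          refine le_trans h1 (mul_le_mul_of_nonneg_left h2 (by positivity))
      _ = (((n:ℝ)+1) ^ l * (1 + 1/((n:ℝ)+1)) ^ l) *
            (Real.exp (l * ∑ j ∈ Finset.range n, (1/((j:ℝ)+1))^2) *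
              Real.exp (l * (1/((n:ℝ)+1)) ^ 2)) := by ring
      _ = ((n:ℝ)+2) ^ l *
            Real.exp (l * (∑ j ∈ Finset.range n, (1/((j:ℝ)+1))^2 + (1/((n:ℝ)+1))^2)) := by
          rw [h3, ← Real.exp_add, mul_add]
      _ = _ := by push_cast; ring_nf

lemma g_bdd (hl0 : 0 < l) (hl1 : l ≤ 1) (n : ℕ) :
    Pprod l n / ((n : ℝ) + 1) ^ l ≤ Real.exp (2 * l) := by
  have hx : (0:ℝ) < ((n:ℝ)+1) ^ l := by positivity
  rw [div_le_iff₀ hx]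
  calc Pprod l n ≤ ((n:ℝ)+1) ^ l * Real.exp (l * ∑ j ∈ Finset.range n, (1/((j:ℝ)+1))^2) :=
        Pprod_le hl0 hl1 n
    _ ≤ ((n:ℝ)+1) ^ l * Real.exp (2 * l) := by
        refine mul_le_mul_of_nonneg_left (Real.exp_le_exp.2 ?_) hx.le
        have h := sum_sq_le n
        have : (0:ℝ) < 2 / ((n:ℝ)+1) := by positivity
        nlinarith [hl0.le]
    _ = Real.exp (2*l) * ((n:ℝ)+1) ^ l := by ring

lemma g_tendsto (hl0 : 0 < l) (hl1 : l ≤ 1) :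
    ∃ q : ℝ, Tendsto (fun n : ℕ => Pprod l n / ((n : ℝ) + 1) ^ l) atTop (nhds q) := by
  refine ⟨_, tendsto_atTop_ciSup (g_mono hl0 hl1) ⟨Real.exp (2*l), ?_⟩⟩
  rintro x ⟨n, rfl⟩
  exact g_bdd hl0 hl1 n

lemma Pprod_div_rpow_tendsto (hl0 : 0 < l) (hl1 : l ≤ 1) :
    ∃ q : ℝ, Tendsto (fun n : ℕ => Pprod l n / (n : ℝ) ^ l) atTop (nhds q) := by
  obtain ⟨q, hq⟩ := g_tendsto hl0 hl1
  have hratio : Tendsto (fun n : ℕ => (((n:ℝ) + 1) / (n : ℝ)) ^ l) atTop (nhds 1) := by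
    have h1 : Tendsto (fun n : ℕ => ((n:ℝ) + 1) / (n : ℝ)) atTop (nhds 1) := by
      have : ∀ᶠ n : ℕ in atTop, ((n:ℝ) + 1) / (n : ℝ) = 1 + 1 / (n:ℝ) := by
        filter_upwards [eventually_gt_atTop 0] with n hn
        have : (n:ℝ) ≠ 0 := Nat.cast_ne_zero.mpr hn.ne'
        field_simp
      rw [tendsto_congr' this]
      have := tendsto_one_div_atTop_nhds_zero_nat (𝕜 := ℝ)
      simpa using tendsto_const_nhds.add this
    have hcont : ContinuousAt (fun x : ℝ => x ^ l) 1 :=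
      Real.continuousAt_rpow_const 1 l (Or.inl one_ne_zero)
    have := hcont.tendsto.comp h1
    rwa [Real.one_rpow] at this
  refine ⟨q * 1, ?_⟩
  have hmul := hq.mul hratio
  refine hmul.congr' ?_
  filter_upwards [eventually_gt_atTop 0] with n hn
  have hn0 : (0:ℝ) < (n:ℝ) := Nat.cast_pos.mpr hn
  rw [Real.div_rpow (by positivity) hn0.le]
  field_simp

end UrnAux

open MeasureTheory Filter Matrix
open scoped ENNReal NNReal

set_option maxHeartbeats 2000000


/-- Three-color urn with diagonalizable replacement matrix `R = [[s,(1-s)p],[0,P]]`,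
`P` irreducible stochastic with non-principal eigenvalue `λ ∈ (1/2, 1)`, and `v₂` an
eigenvector of `R` for `λ`. Then `Z_n = C_n v₂ / Π_n(λ)` is an L²-bounded martingale
and `C_n v₂ / n^λ` converges almost surely. -/
theorem stmt_14 {Ω : Type*} {m0 : MeasurableSpace Ω} (μ : Measure Ω) [IsProbabilityMeasure μ]
    (ℱ : Filtration ℕ m0) (s l : ℝ) (p : Fin 2 → ℝ) (P : Matrix (Fin 2) (Fin 2) ℝ)
    (v2 : Fin 3 → ℝ) (C χ : ℕ → Ω → Fin 3 → ℝ)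
    (hs0 : 0 < s) (hs1 : s < 1)
    (hp : ∀ i, 0 ≤ p i) (hpsum : p 0 + p 1 = 1)
    (hPnn : ∀ i j, 0 ≤ P i j) (hProw : ∀ i, ∑ j, P i j = 1)
    (hirr : 0 < P 0 1 ∧ 0 < P 1 0)
    (hl : 1 / 2 < l) (hl1 : l < 1)
    (R : Matrix (Fin 3) (Fin 3) ℝ)
    (hR : R = !![s, (1 - s) * p 0, (1 - s) * p 1;
                 0, P 0 0, P 0 1;
                 0, P 1 0, P 1 1])
    (hv2 : R.mulVec v2 = l • v2) (hv20 : v2 ≠ 0)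
    (hCnn : ∀ n ω i, 0 ≤ C n ω i) (hCtot : ∀ n ω, ∑ i, C n ω i = n + 1)
    (hχ : ∀ n ω, ∃ i : Fin 3, χ (n + 1) ω = Pi.single i 1)
    (hCmeas : ∀ n i, Measurable[ℱ n] (fun ω => C n ω i))
    (hχmeas : ∀ n i, Measurable[ℱ (n + 1)] (fun ω => χ (n + 1) ω i))
    (hevol : ∀ n ω, C (n + 1) ω = C n ω + Matrix.vecMul (χ (n + 1) ω) R)
    (hdraw : ∀ n i, μ[fun ω => χ (n + 1) ω i | ℱ n] =ᵐ[μ] fun ω => C n ω i / (n + 1)) :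
    Martingale
      (fun n ω => (∑ i, C n ω i * v2 i) / ∏ j ∈ Finset.range n, (1 + l / (j + 1))) ℱ μ ∧
    (∃ B : ℝ, ∀ n,
      ∫ ω, ((∑ i, C n ω i * v2 i) / ∏ j ∈ Finset.range n, (1 + l / (j + 1))) ^ 2 ∂μ ≤ B) ∧
    ∀ᵐ ω ∂μ, ∃ L : ℝ,
      Tendsto (fun n : ℕ => (∑ i, C n ω i * v2 i) / (n : ℝ) ^ l) atTop (nhds L) := by
  classical
  have hl0 : 0 < l := lt_trans (by norm_num) hl
  have hl1' : l ≤ 1 := hl1.le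
  -- notation
  set S : ℕ → Ω → ℝ := fun n ω => ∑ i, C n ω i * v2 i with hSdef
  set X : ℕ → Ω → ℝ := fun n ω => ∑ i, χ (n + 1) ω i * v2 i with hXdef
  set Z : ℕ → Ω → ℝ := fun n ω => S n ω / UrnAux.Pprod l n with hZdef
  set M : ℝ := |v2 0| + |v2 1| + |v2 2| with hMdef
  have hM : ∀ i, |v2 i| ≤ M := by
    intro i
    have h0 := abs_nonneg (v2 0); have h1 := abs_nonneg (v2 1); have h2 := abs_nonneg (v2 2)
    fin_cases i
    · show |v2 0| ≤ M; rw [hMdef]; linarith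
    · show |v2 1| ≤ M; rw [hMdef]; linarith
    · show |v2 2| ≤ M; rw [hMdef]; linarith
  have hMnn : 0 ≤ M := le_trans (abs_nonneg _) (hM 0)
  have hPpos : ∀ n : ℕ, 0 < UrnAux.Pprod l n := UrnAux.Pprod_pos hl0
  have hPge : ∀ n : ℕ, ((n:ℝ) + 1) ^ l ≤ UrnAux.Pprod l n := UrnAux.Pprod_ge hl0 hl1'
  have hP1 : ∀ n : ℕ, (1:ℝ) ≤ UrnAux.Pprod l n := by
    intro n
    refine le_trans ?_ (hPge n)
    calc (1:ℝ) = 1 ^ l := (Real.one_rpow l).symm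
      _ ≤ ((n:ℝ)+1)^l := Real.rpow_le_rpow zero_le_one
          (by linarith [show (0:ℝ) ≤ (n:ℝ) from Nat.cast_nonneg n]) hl0.le
  -- basic bounds
  have hXval : ∀ n ω, ∃ i, X n ω = v2 i := by
    intro n ω
    obtain ⟨i, hi⟩ := hχ n ω
    refine ⟨i, ?_⟩
    simp only [hXdef, hi]
    simp [Pi.single_apply]
  have hXbdd : ∀ n ω, |X n ω| ≤ M := by
    intro n ω; obtain ⟨i, hi⟩ := hXval n ω; rw [hi]; exact hM i
  have hSbdd : ∀ n ω, |S n ω| ≤ ((n:ℝ) + 1) * M := by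
    intro n ω
    calc |S n ω| ≤ ∑ i, |C n ω i * v2 i| := Finset.abs_sum_le_sum_abs _ _
      _ = ∑ i, C n ω i * |v2 i| := by
          refine Finset.sum_congr rfl fun i _ => ?_
          rw [abs_mul, abs_of_nonneg (hCnn n ω i)]
      _ ≤ ∑ i, C n ω i * M :=
          Finset.sum_le_sum fun i _ => mul_le_mul_of_nonneg_left (hM i) (hCnn n ω i)
      _ = ((n:ℝ) + 1) * M := by rw [← Finset.sum_mul, hCtot]
  have hZbdd : ∀ n ω, |Z n ω| ≤ ((n:ℝ) + 1) * M := by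
    intro n ω
    simp only [hZdef, abs_div, abs_of_pos (hPpos n)]
    calc |S n ω| / UrnAux.Pprod l n ≤ |S n ω| / 1 :=
          div_le_div_of_nonneg_left (abs_nonneg _) (by norm_num) (hP1 n) |>.trans_eq rfl
      _ = |S n ω| := div_one _
      _ ≤ ((n:ℝ) + 1) * M := hSbdd n ω
  -- measurability
  have hSmeas : ∀ n, Measurable[ℱ n] (S n) :=
    fun n => Finset.measurable_sum _ fun i _ => (hCmeas n i).mul_const _
  have hXmeas : ∀ n, Measurable[ℱ (n+1)] (X n) :=
    fun n => Finset.measurable_sum _ fun i _ => (hχmeas n i).mul_const _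
  have hZmeas : ∀ n, Measurable[ℱ n] (Z n) := fun n => (hSmeas n).div_const _
  have hint_bdd : ∀ (f : Ω → ℝ) (c : ℝ), Measurable f → (∀ ω, |f ω| ≤ c) → Integrable f μ := by
    intro f c hm hb
    exact ⟨hm.aestronglyMeasurable,
      HasFiniteIntegral.of_bounded (C := c) (ae_of_all _ fun ω => by simpa using hb ω)⟩
  have hSint : ∀ n, Integrable (S n) μ :=
    fun n => hint_bdd _ _ ((hSmeas n).mono (ℱ.le n) le_rfl) (hSbdd n)
  have hXint : ∀ n, Integrable (X n) μ :=
    fun n => hint_bdd _ _ ((hXmeas n).mono (ℱ.le (n+1)) le_rfl) (hXbdd n)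
  have hZint : ∀ n, Integrable (Z n) μ :=
    fun n => hint_bdd _ _ ((hZmeas n).mono (ℱ.le n) le_rfl) (hZbdd n)
  -- evolution of S
  have hSrec : ∀ n ω, S (n + 1) ω = S n ω + l * X n ω := by
    intro n ω
    have hdp : Matrix.vecMul (χ (n+1) ω) R ⬝ᵥ v2 = l * (χ (n+1) ω ⬝ᵥ v2) := by
      rw [← Matrix.dotProduct_mulVec, hv2, dotProduct_smul, smul_eq_mul]
    have h1 : S (n+1) ω = ∑ i, (C n ω i + Matrix.vecMul (χ (n+1) ω) R i) * v2 i := by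
      simp only [hSdef, hevol n ω, Pi.add_apply]
    rw [h1]
    simp only [add_mul, Finset.sum_add_distrib]
    have : ∑ i, Matrix.vecMul (χ (n+1) ω) R i * v2 i = l * X n ω := by
      simpa [dotProduct, hXdef] using hdp
    rw [this]
  -- conditional expectation of X
  have hcondX : ∀ n, μ[X n | ℱ n] =ᵐ[μ] fun ω => S n ω / ((n:ℝ) + 1) := by
    intro n
    have hXsum : X n = ∑ i ∈ Finset.univ, fun ω => χ (n+1) ω i * v2 i := by
      funext ω; simp [hXdef]
    have hfi : ∀ i ∈ (Finset.univ : Finset (Fin 3)),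
        Integrable (fun ω => χ (n+1) ω i * v2 i) μ := by
      intro i _
      refine hint_bdd _ M (((hχmeas n i).mono (ℱ.le (n+1)) le_rfl).mul_const _) ?_
      intro ω
      obtain ⟨j, hj⟩ := hχ n ω
      rw [hj, Pi.single_apply]
      by_cases hij : i = j
      · rw [if_pos hij, one_mul]; exact hM i
      · rw [if_neg hij, zero_mul, abs_zero]; exact hMnn
    have h1 : μ[X n | ℱ n] =ᵐ[μ]
        ∑ i ∈ Finset.univ, μ[(fun ω => χ (n+1) ω i * v2 i) | ℱ n] := by
      rw [hXsum]; exact condExp_finsetSum hfi (ℱ n)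
    have h2 : ∀ i : Fin 3, μ[(fun ω => χ (n+1) ω i * v2 i) | ℱ n]
        =ᵐ[μ] fun ω => v2 i * (C n ω i / ((n:ℝ) + 1)) := by
      intro i
      have heq : (fun ω => χ (n+1) ω i * v2 i) = v2 i • (fun ω => χ (n+1) ω i) := by
        funext ω; simp [mul_comm, smul_eq_mul]
      rw [heq]
      refine (condExp_smul (v2 i) _ (ℱ n)).trans ?_
      filter_upwards [hdraw n i] with ω hω
      simp only [Pi.smul_apply, smul_eq_mul]
      rw [hω]
    refine h1.trans ?_
    filter_upwards [h2 0, h2 1, h2 2] with ω e0 e1 e2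
    have hs : (∑ i ∈ Finset.univ, μ[(fun ω => χ (n+1) ω i * v2 i) | ℱ n]) ω
        = ∑ i, (μ[(fun ω => χ (n+1) ω i * v2 i) | ℱ n]) ω := by
      simp [Finset.sum_apply]
    rw [hs, Fin.sum_univ_three, e0, e1, e2]
    simp only [hSdef, Fin.sum_univ_three]
    have hne : ((n:ℝ) + 1) ≠ 0 := by positivity
    field_simp
  -- one-step conditional expectation of S
  have hS1 : ∀ n, μ[S (n+1) | ℱ n] =ᵐ[μ] fun ω => (1 + l / ((n:ℝ) + 1)) * S n ω := by
    intro n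
    have hfun : S (n+1) = S n + l • X n := by
      funext ω
      simp only [Pi.add_apply, Pi.smul_apply, smul_eq_mul]
      exact hSrec n ω
    rw [hfun]
    refine (condExp_add (hSint n) ((hXint n).smul l) (ℱ n)).trans ?_
    have hb : μ[S n | ℱ n] = S n :=
      condExp_of_stronglyMeasurable (ℱ.le n) ((hSmeas n).stronglyMeasurable) (hSint n)
    have hc := condExp_smul (μ := μ) (m := ℱ n) l (X n)
    filter_upwards [hc, hcondX n] with ω h1 h2
    rw [Pi.add_apply, hb, h1, Pi.smul_apply, smul_eq_mul, h2]
    have hne : ((n:ℝ) + 1) ≠ 0 := by positivity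
    field_simp
  -- Z is a martingale
  have hZcond : ∀ n, Z n =ᵐ[μ] μ[Z (n+1) | ℱ n] := by
    intro n
    have hfun : Z (n+1) = (UrnAux.Pprod l (n+1))⁻¹ • S (n+1) := by
      funext ω
      simp only [hZdef, Pi.smul_apply, smul_eq_mul]
      rw [div_eq_mul_inv, mul_comm]
    rw [hfun]
    have h1 := condExp_smul (μ := μ) (m := ℱ n) (UrnAux.Pprod l (n+1))⁻¹ (S (n+1))
    refine (EventuallyEq.trans h1 ?_).symm
    filter_upwards [hS1 n] with ω hω
    simp only [Pi.smul_apply, smul_eq_mul]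
    rw [hω]
    simp only [hZdef]
    rw [UrnAux.Pprod_succ]
    have h2 : (1 + l / ((n:ℝ) + 1)) ≠ 0 := ne_of_gt (UrnAux.fact_pos hl0 n)
    have h3 : UrnAux.Pprod l n ≠ 0 := ne_of_gt (hPpos n)
    field_simp
  have hadp : StronglyAdapted ℱ Z := fun n => (hZmeas n).stronglyMeasurable
  have hmart : Martingale Z ℱ μ := martingale_nat hadp hZint hZcond
  -- increments
  set D : ℕ → Ω → ℝ := fun n ω => Z (n+1) ω - Z n ω with hDdef
  have hDeq : ∀ n ω, D n ω = l * (X n ω - S n ω / ((n:ℝ)+1)) / UrnAux.Pprod l (n+1) := by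
    intro n ω
    simp only [hDdef, hZdef]
    rw [hSrec n ω, UrnAux.Pprod_succ]
    have h2 : (1 + l / ((n:ℝ) + 1)) ≠ 0 := ne_of_gt (UrnAux.fact_pos hl0 n)
    have h3 : UrnAux.Pprod l n ≠ 0 := ne_of_gt (hPpos n)
    have hne : ((n:ℝ) + 1) ≠ 0 := by positivity
    field_simp
    ring
  have hP2 : ∀ n : ℕ, ((n:ℝ) + 2) ^ l ≤ UrnAux.Pprod l (n+1) := by
    intro n
    have h := hPge (n+1)
    push_cast at h
    rwa [show ((n:ℝ)+1+1) = (n:ℝ)+2 from by ring] at h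
  have hDbdd : ∀ n ω, |D n ω| ≤ 2 * l * M / (((n:ℝ) + 2) ^ l) := by
    intro n ω
    rw [hDeq n ω, abs_div, abs_of_pos (hPpos (n+1)), abs_mul, abs_of_pos hl0]
    have hs2 : |S n ω / ((n:ℝ)+1)| ≤ M := by
      rw [abs_div, abs_of_pos (show (0:ℝ) < (n:ℝ)+1 by positivity),
        div_le_iff₀ (show (0:ℝ) < (n:ℝ)+1 by positivity)]
      calc |S n ω| ≤ ((n:ℝ)+1) * M := hSbdd n ω
        _ = M * ((n:ℝ)+1) := mul_comm _ _
    have h1 : |X n ω - S n ω / ((n:ℝ)+1)| ≤ 2 * M := by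
      have h := abs_add_le (X n ω) (-(S n ω / ((n:ℝ)+1)))
      rw [abs_neg] at h
      have := hXbdd n ω
      calc |X n ω - S n ω / ((n:ℝ)+1)| = |X n ω + -(S n ω / ((n:ℝ)+1))| := by ring_nf
        _ ≤ |X n ω| + |S n ω / ((n:ℝ)+1)| := h
        _ ≤ 2 * M := by linarith
    have hden : (0:ℝ) < ((n:ℝ)+2) ^ l := by positivity
    refine div_le_div₀ (by positivity) ?_ hden (hP2 n)
    calc l * |X n ω - S n ω / ((n:ℝ)+1)| ≤ l * (2 * M) :=
          mul_le_mul_of_nonneg_left h1 hl0.le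
      _ = 2 * l * M := by ring
  -- integrability of pieces
  have hDmeas : ∀ n, Measurable (D n) := by
    intro n
    exact ((hZmeas (n+1)).mono (ℱ.le (n+1)) le_rfl).sub ((hZmeas n).mono (ℱ.le n) le_rfl)
  have hDint : ∀ n, Integrable (D n) μ :=
    fun n => hint_bdd _ _ (hDmeas n) (hDbdd n)
  have hZDint : ∀ n, Integrable (Z n * D n) μ := by
    intro n
    refine hint_bdd _ ((((n:ℝ)+1) * M) * (2 * l * M / (((n:ℝ)+2)^l)))
      (((hZmeas n).mono (ℱ.le n) le_rfl).mul (hDmeas n)) ?_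
    intro ω
    rw [Pi.mul_apply, abs_mul]
    exact mul_le_mul (hZbdd n ω) (hDbdd n ω) (abs_nonneg _)
      (by positivity)
  have hZ2int : ∀ n, Integrable (fun ω => (Z n ω)^2) μ := by
    intro n
    refine hint_bdd _ ((((n:ℝ)+1) * M)^2)
      (((hZmeas n).mono (ℱ.le n) le_rfl).pow_const 2) ?_
    intro ω
    rw [abs_pow]
    exact pow_le_pow_left₀ (abs_nonneg _) (hZbdd n ω) 2
  have hD2int : ∀ n, Integrable (fun ω => (D n ω)^2) μ := by
    intro n
    refine hint_bdd _ ((2 * l * M / (((n:ℝ)+2)^l))^2) ((hDmeas n).pow_const 2) ?_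
    intro ω
    rw [abs_pow]
    exact pow_le_pow_left₀ (abs_nonneg _) (hDbdd n ω) 2
  -- orthogonality of increments
  have hDcond : ∀ n, μ[D n | ℱ n] =ᵐ[μ] 0 := by
    intro n
    have hfun : D n = Z (n+1) - Z n := by funext ω; simp [hDdef]
    rw [hfun]
    refine (condExp_sub (hZint (n+1)) (hZint n) (ℱ n)).trans ?_
    have hzn : μ[Z n | ℱ n] = Z n :=
      condExp_of_stronglyMeasurable (ℱ.le n) ((hZmeas n).stronglyMeasurable) (hZint n)
    filter_upwards [hmart.condExp_ae_eq (Nat.le_succ n)] with ω hω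
    rw [Pi.sub_apply, hω, hzn]
    simp
  have horth : ∀ n, ∫ ω, Z n ω * D n ω ∂μ = 0 := by
    intro n
    have hmul := condExp_mul_of_stronglyMeasurable_left (μ := μ)
      ((hZmeas n).stronglyMeasurable) (hZDint n) (hDint n)
    have hzero : μ[Z n * D n | ℱ n] =ᵐ[μ] 0 := by
      refine hmul.trans ?_
      filter_upwards [hDcond n] with ω hω
      rw [Pi.mul_apply, hω]
      simp
    calc ∫ ω, Z n ω * D n ω ∂μ = ∫ ω, (Z n * D n) ω ∂μ := rfl
      _ = ∫ ω, (μ[Z n * D n | ℱ n]) ω ∂μ := (integral_condExp (ℱ.le n)).symm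
      _ = 0 := by rw [integral_congr_ae hzero]; simp
  -- L² recursion
  have hKpos : ∀ n : ℕ, (0:ℝ) ≤ (2*l*M)^2 / (((n:ℝ)+2)^l)^2 := by
    intro n; positivity
  have hL2step : ∀ n, ∫ ω, (Z (n+1) ω)^2 ∂μ ≤
      ∫ ω, (Z n ω)^2 ∂μ + (2*l*M)^2 / (((n:ℝ)+2)^l)^2 := by
    intro n
    have hptw : ∀ ω, (Z (n+1) ω)^2 = (Z n ω)^2 + (2 * (Z n * D n) ω + (D n ω)^2) := by
      intro ω
      have h : Z (n+1) ω = Z n ω + D n ω := by simp [hDdef]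
      rw [Pi.mul_apply, h]; ring
    have hint23 : Integrable (fun ω => 2 * (Z n * D n) ω + (D n ω)^2) μ :=
      (((hZDint n).const_mul 2).add (hD2int n))
    have hD2le : ∫ ω, (D n ω)^2 ∂μ ≤ (2*l*M)^2 / (((n:ℝ)+2)^l)^2 := by
      have hb : ∀ ω, (D n ω)^2 ≤ (2*l*M)^2 / (((n:ℝ)+2)^l)^2 := by
        intro ω
        have h := pow_le_pow_left₀ (abs_nonneg _) (hDbdd n ω) 2
        rw [sq_abs] at h
        calc (D n ω)^2 ≤ (2*l*M / (((n:ℝ)+2)^l))^2 := h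
          _ = (2*l*M)^2 / (((n:ℝ)+2)^l)^2 := div_pow _ _ 2
      calc ∫ ω, (D n ω)^2 ∂μ ≤ ∫ _ω, ((2*l*M)^2 / (((n:ℝ)+2)^l)^2) ∂μ :=
            integral_mono (hD2int n) (integrable_const _) hb
        _ = (2*l*M)^2 / (((n:ℝ)+2)^l)^2 := by simp
    calc ∫ ω, (Z (n+1) ω)^2 ∂μ
        = ∫ ω, ((Z n ω)^2 + (2 * (Z n * D n) ω + (D n ω)^2)) ∂μ := by
          exact integral_congr_ae (ae_of_all _ hptw)
      _ = ∫ ω, (Z n ω)^2 ∂μ + ∫ ω, (2 * (Z n * D n) ω + (D n ω)^2) ∂μ :=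
          integral_add (hZ2int n) hint23
      _ = ∫ ω, (Z n ω)^2 ∂μ + (2 * ∫ ω, Z n ω * D n ω ∂μ + ∫ ω, (D n ω)^2 ∂μ) := by
          rw [integral_add ((hZDint n).const_mul 2) (hD2int n), integral_const_mul]
          rfl
      _ = ∫ ω, (Z n ω)^2 ∂μ + ∫ ω, (D n ω)^2 ∂μ := by rw [horth n]; ring
      _ ≤ _ := add_le_add_right hD2le _
  -- summability of the error series
  have h2l : (1:ℝ) < 2 * l := by linarith
  have hsum1 : Summable (fun n : ℕ => 1 / ((n:ℝ)+1) ^ (2*l)) := by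
    have h0 : Summable (fun n : ℕ => 1 / (n:ℝ) ^ (2*l)) :=
      Real.summable_one_div_nat_rpow.mpr h2l
    have := (summable_nat_add_iff 1).mpr h0
    refine this.congr fun n => ?_
    push_cast
    rfl
  set T : ℝ := ∑' n : ℕ, (2*l*M)^2 * (1 / ((n:ℝ)+1) ^ (2*l)) with hTdef
  have hsum2 : Summable (fun n : ℕ => (2*l*M)^2 * (1 / ((n:ℝ)+1) ^ (2*l))) :=
    hsum1.mul_left _
  have hKle : ∀ n : ℕ, (2*l*M)^2 / (((n:ℝ)+2)^l)^2 ≤ (2*l*M)^2 * (1 / ((n:ℝ)+1) ^ (2*l)) := by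
    intro n
    rw [mul_one_div]
    have he : (((n:ℝ)+2)^l)^2 = ((n:ℝ)+2) ^ (2*l) := by
      rw [← Real.rpow_natCast (((n:ℝ)+2)^l) 2, ← Real.rpow_mul (by positivity)]
      norm_num
      rw [mul_comm]
    rw [he]
    refine div_le_div_of_nonneg_left (by positivity) (by positivity) ?_
    exact Real.rpow_le_rpow (by positivity) (by linarith) (by linarith)
  have hpartial : ∀ n : ℕ, ∑ j ∈ Finset.range n, (2*l*M)^2 / (((j:ℝ)+2)^l)^2 ≤ T := by
    intro n
    calc ∑ j ∈ Finset.range n, (2*l*M)^2 / (((j:ℝ)+2)^l)^2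
        ≤ ∑ j ∈ Finset.range n, (2*l*M)^2 * (1 / ((j:ℝ)+1) ^ (2*l)) :=
          Finset.sum_le_sum fun j _ => hKle j
      _ ≤ T := hsum2.sum_le_tsum _ (fun j _ => by positivity)
  have hL2cum : ∀ n, ∫ ω, (Z n ω)^2 ∂μ ≤
      ∫ ω, (Z 0 ω)^2 ∂μ + ∑ j ∈ Finset.range n, (2*l*M)^2 / (((j:ℝ)+2)^l)^2 := by
    intro n
    induction n with
    | zero => simp
    | succ n ih =>
      rw [Finset.sum_range_succ]
      have := hL2step n
      linarith
  set B : ℝ := ∫ ω, (Z 0 ω)^2 ∂μ + T with hBdef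
  have hL2 : ∀ n, ∫ ω, (Z n ω)^2 ∂μ ≤ B := by
    intro n
    calc ∫ ω, (Z n ω)^2 ∂μ ≤
        ∫ ω, (Z 0 ω)^2 ∂μ + ∑ j ∈ Finset.range n, (2*l*M)^2 / (((j:ℝ)+2)^l)^2 := hL2cum n
      _ ≤ B := by rw [hBdef]; exact add_le_add_right (hpartial n) _
  -- L¹ bound and a.s. convergence
  have hZ1 : ∀ n, ∫ ω, |Z n ω| ∂μ ≤ (B + 1) / 2 := by
    intro n
    have hb : ∀ ω, |Z n ω| ≤ ((Z n ω)^2 + 1) / 2 := by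
      intro ω
      have h := sq_nonneg (|Z n ω| - 1)
      rw [sub_sq, sq_abs] at h
      linarith
    calc ∫ ω, |Z n ω| ∂μ ≤ ∫ ω, ((Z n ω)^2 + 1) / 2 ∂μ :=
          integral_mono (hZint n).abs (((hZ2int n).add (integrable_const 1)).div_const 2) hb
      _ = (∫ ω, ((Z n ω)^2 + 1) ∂μ) / 2 := integral_div 2 _
      _ = (∫ ω, (Z n ω)^2 ∂μ + 1) / 2 := by
          rw [integral_add (hZ2int n) (integrable_const 1)]
          simp
      _ ≤ (B + 1) / 2 := by linarith [hL2 n]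
  have hbdd : ∀ n, eLpNorm (Z n) 1 μ ≤ ENNReal.ofReal ((B+1)/2 ⊔ 0) := by
    intro n
    have h1 : eLpNorm (Z n) 1 μ = ENNReal.ofReal (∫ ω, ‖Z n ω‖ ∂μ) := by
      rw [eLpNorm_one_eq_lintegral_enorm, ← ofReal_integral_norm_eq_lintegral_enorm (hZint n)]
    rw [h1]
    refine ENNReal.ofReal_le_ofReal ?_
    refine le_trans ?_ (le_max_left _ _)
    simp only [Real.norm_eq_abs]
    exact hZ1 n
  have hbdd' : ∀ n, eLpNorm (Z n) 1 μ ≤ (((B+1)/2 ⊔ 0).toNNReal : ℝ≥0∞) := by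
    intro n
    exact hbdd n
  have hae := (hmart.submartingale).exists_ae_tendsto_of_bdd hbdd'
  obtain ⟨q, hq⟩ := UrnAux.Pprod_div_rpow_tendsto hl0 hl1'
  refine ⟨hmart, ⟨B, fun n => hL2 n⟩, ?_⟩
  filter_upwards [hae] with ω hω
  obtain ⟨c, hc⟩ := hω
  refine ⟨c * q, ?_⟩
  have hmul := hc.mul hq
  refine Tendsto.congr' ?_ hmul
  filter_upwards [eventually_ge_atTop 1] with n hn
  have hn0 : (0:ℝ) < (n:ℝ) := by exact_mod_cast hn
  have hrp : (0:ℝ) < (n:ℝ) ^ l := Real.rpow_pos_of_pos hn0 l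
  have h3 : UrnAux.Pprod l n ≠ 0 := ne_of_gt (hPpos n)
  have h4 : (n:ℝ) ^ l ≠ 0 := ne_of_gt hrp
  simp only [hZdef, hSdef]
  field_simp
end
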